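/- arXiv:1106.2447 — 7 statements merged into one kernel-verified Lean document; each statement's English description precedes it below -/
import Mathlib

section
/- Let P = (P₋, P₊) be a linear Jordan pair. The k-module TKK(P) = P₋ ⊕ ins(P) ⊕ P₊, where ins(P) is the inner structure algebra spanned by the operators ν(a,b) = (V_{a,b}, -V_{b,a}), equipped with the bracket [a+X+b, c+Y+d] = (Xc - Ya) + ([X,Y] + ν(a,d) - ν(c,b)) + (Xd - Yb) for X,Y ∈ ins(P), a,c ∈ P₋, b,d ∈ P₊, is a Lie algebra. -/
/-- A (not yet bundled) Lie bracket on a `k`-module: bilinear, alternating,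
and satisfying the Jacobi (Leibniz) identity. -/
def IsLieBracket {k V : Type*} [CommRing k] [AddCommGroup V] [Module k V]
    (B : V → V → V) : Prop :=
  (∀ x y z, B (x + y) z = B x z + B y z) ∧
  (∀ x y z, B x (y + z) = B x y + B x z) ∧
  (∀ (c : k) x y, B (c • x) y = c • B x y) ∧
  (∀ (c : k) x y, B x (c • y) = c • B x y) ∧
  (∀ x, B x x = 0) ∧
  (∀ x y z, B x (B y z) = B (B x y) z + B y (B x z))

set_option maxHeartbeats 1000000 in
/-- For a linear Jordan pair `P`, the module
`TKK(P) = P₋ ⊕ ins(P) ⊕ P₊`, where `ins(P)` is the span of the operators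
`ν(a,b) = (V_{a,b}, -V_{b,a})`, equipped with the bracket
`[a+X+b, c+Y+d] = (Xc - Ya) + ([X,Y] + ν(a,d) - ν(c,b)) + (Xd - Yb)`,
is a Lie algebra. -/
theorem stmt1 {k : Type*} [CommRing k]
    (htor2 : ∀ x : k, 2 * x = 0 → x = 0) (htor3 : ∀ x : k, 3 * x = 0 → x = 0)
    {Pm Pp : Type*} [AddCommGroup Pm] [AddCommGroup Pp] [Module k Pm] [Module k Pp]
    (tm : Pm →ₗ[k] Pp →ₗ[k] Pm →ₗ[k] Pm)
    (tp : Pp →ₗ[k] Pm →ₗ[k] Pp →ₗ[k] Pp)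
    (symm_m : ∀ a b c, tm a b c = tm c b a)
    (symm_p : ∀ b a d, tp b a d = tp d a b)
    (jid_m : ∀ a b c d x, tm a b (tm c d x) - tm c d (tm a b x)
      = tm (tm a b c) d x - tm c (tp b a d) x)
    (jid_p : ∀ b a d c y, tp b a (tp d c y) - tp d c (tp b a y)
      = tp (tp b a d) c y - tp d (tm a b c) y)
    (ν : Pm → Pp → Module.End k Pm × Module.End k Pp)
    (hν : ∀ a b, ν a b = (tm a b, -(tp b a)))
    -- ins(P), the inner structure algebra
    (I : Submodule k (Module.End k Pm × Module.End k Pp))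
    (hI : I = Submodule.span k {z | ∃ a b, z = ν a b}) :
    ∃ B : (Pm × I × Pp) → (Pm × I × Pp) → (Pm × I × Pp),
      IsLieBracket (k := k) B ∧
      (∀ p q, (B p q).1
        = ((p.2.1 : Module.End k Pm × Module.End k Pp)).1 q.1
          - ((q.2.1 : Module.End k Pm × Module.End k Pp)).1 p.1) ∧
      (∀ p q, ((B p q).2.1 : Module.End k Pm × Module.End k Pp)
        = ⁅(p.2.1 : Module.End k Pm × Module.End k Pp),
           (q.2.1 : Module.End k Pm × Module.End k Pp)⁆
          + ν p.1 q.2.2 - ν q.1 p.2.2) ∧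
      (∀ p q, (B p q).2.2
        = ((p.2.1 : Module.End k Pm × Module.End k Pp)).2 q.2.2
          - ((q.2.1 : Module.End k Pm × Module.End k Pp)).2 p.2.2) := by
  classical
  letI : LieRing (Module.End k Pm × Module.End k Pp) := LieRing.ofAssociativeRing
  letI : LieAlgebra k (Module.End k Pm × Module.End k Pp) := LieAlgebra.ofAssociativeAlgebra
  -- bilinear version of ν
  let N : Pm →ₗ[k] Pp →ₗ[k] Module.End k Pm × Module.End k Pp :=
    LinearMap.mk₂ k (fun a b => (tm a b, -(tp b a)))
      (fun a a' b => by simp [Prod.ext_iff, map_add, neg_add]; abel)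
      (fun c a b => by simp [Prod.ext_iff, map_smul, smul_neg])
      (fun a b b' => by simp [Prod.ext_iff, map_add, neg_add]; abel)
      (fun c a b => by simp [Prod.ext_iff, map_smul, smul_neg])
  have hνN : ∀ a b, ν a b = N a b := fun a b => hν a b
  have hNmem : ∀ a b, N a b ∈ I := fun a b =>
    hI ▸ Submodule.subset_span ⟨a, b, (hνN a b).symm⟩
  have hbr : ∀ x y : Module.End k Pm × Module.End k Pp,
      ⁅x, y⁆ = (⁅x.1, y.1⁆, ⁅x.2, y.2⁆) := fun _ _ => rfl
  -- key relation: for X ∈ I, ⁅X, N c f⁆ = N (X.1 c) f + N c (X.2 f)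
  have hkey : ∀ X ∈ I, ∀ c f, ⁅X, N c f⁆ = N (X.1 c) f + N c (X.2 f) := by
    rw [hI]
    intro X hX
    induction hX using Submodule.span_induction with
    | mem x hx =>
        obtain ⟨a, b, rfl⟩ := hx
        rw [hνN]
        intro c f
        have h1 : (N a b).1 = tm a b := rfl
        have h2 : (N a b).2 = -(tp b a) := rfl
        rw [h1, h2]
        refine Prod.ext ?_ ?_
        · ext x
          simp only [N, hbr, LinearMap.mk₂_apply, Prod.fst_add, Ring.lie_def,
            LinearMap.sub_apply, Module.End.mul_apply, LinearMap.add_apply,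
            LinearMap.neg_apply, map_neg, Prod.fst_neg, Prod.snd_neg]
          rw [jid_m a b c f x]
          abel
        · ext y
          simp only [N, hbr, LinearMap.mk₂_apply, Prod.snd_add, Ring.lie_def,
            LinearMap.sub_apply, Module.End.mul_apply, LinearMap.add_apply,
            LinearMap.neg_apply, map_neg, Prod.fst_neg, Prod.snd_neg, neg_neg,
            neg_lie, lie_neg, neg_sub]
          rw [jid_p b a f c y]
          abel
    | zero => intro c f; simp
    | add x y hx hy ihx ihy =>
        intro c f
        simp only [add_lie, ihx, ihy, Prod.fst_add, Prod.snd_add,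
          LinearMap.add_apply, map_add]
        abel
    | smul r x hx ih =>
        intro c f
        simp only [smul_lie, ih, Prod.smul_fst, Prod.smul_snd,
          LinearMap.smul_apply, map_smul, smul_add]
  have hmemlie : ∀ X ∈ I, ∀ Y ∈ I, ⁅X, Y⁆ ∈ I := by
    intro X hX Y hY
    rw [hI] at hY ⊢
    induction hY using Submodule.span_induction with
    | mem y hy =>
        obtain ⟨c, f, rfl⟩ := hy
        rw [hνN, hkey X hX]
        exact add_mem (hI ▸ hNmem _ _) (hI ▸ hNmem _ _)
    | zero => simp
    | add y z hy hz ihy ihz => rw [lie_add]; exact add_mem ihy ihz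
    | smul r y hy ih => rw [lie_smul]; exact Submodule.smul_mem _ _ ih
  refine ⟨fun p q =>
    ⟨(p.2.1 : Module.End k Pm × Module.End k Pp).1 q.1
      - (q.2.1 : Module.End k Pm × Module.End k Pp).1 p.1,
     ⟨⁅(p.2.1 : Module.End k Pm × Module.End k Pp),
        (q.2.1 : Module.End k Pm × Module.End k Pp)⁆ + N p.1 q.2.2 - N q.1 p.2.2,
      sub_mem (add_mem (hmemlie _ p.2.1.2 _ q.2.1.2) (hNmem _ _)) (hNmem _ _)⟩,
     (p.2.1 : Module.End k Pm × Module.End k Pp).2 q.2.2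
      - (q.2.1 : Module.End k Pm × Module.End k Pp).2 p.2.2⟩,
    ⟨?_, ?_, ?_, ?_, ?_, ?_⟩, fun p q => rfl, fun p q => by rw [hνN, hνN], fun p q => rfl⟩
  · -- add left
    intro x y z
    refine Prod.ext ?_ (Prod.ext (Subtype.ext ?_) ?_)
    · simp only [Prod.fst_add, Prod.snd_add, Submodule.coe_add, LinearMap.add_apply,
        map_add]
      abel
    · simp only [Prod.fst_add, Prod.snd_add, Submodule.coe_add, add_lie, map_add,
        LinearMap.add_apply]
      abel
    · simp only [Prod.fst_add, Prod.snd_add, Submodule.coe_add, LinearMap.add_apply,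
        map_add]
      abel
  · intro x y z
    refine Prod.ext ?_ (Prod.ext (Subtype.ext ?_) ?_)
    · simp only [Prod.fst_add, Prod.snd_add, Submodule.coe_add, LinearMap.add_apply,
        map_add]
      abel
    · simp only [Prod.fst_add, Prod.snd_add, Submodule.coe_add, lie_add, map_add,
        LinearMap.add_apply]
      abel
    · simp only [Prod.fst_add, Prod.snd_add, Submodule.coe_add, LinearMap.add_apply,
        map_add]
      abel
  · intro c x y
    refine Prod.ext ?_ (Prod.ext (Subtype.ext ?_) ?_)
    · simp only [Prod.smul_fst, Prod.smul_snd, Submodule.coe_smul, LinearMap.smul_apply,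
        map_smul, Prod.smul_mk, smul_sub]
    · simp only [Prod.smul_fst, Prod.smul_snd, Submodule.coe_smul, smul_lie, map_smul,
        LinearMap.smul_apply, Prod.smul_mk, smul_sub, smul_add]
    · simp only [Prod.smul_fst, Prod.smul_snd, Submodule.coe_smul, LinearMap.smul_apply,
        map_smul, Prod.smul_mk, smul_sub]
  · intro c x y
    refine Prod.ext ?_ (Prod.ext (Subtype.ext ?_) ?_)
    · simp only [Prod.smul_fst, Prod.smul_snd, Submodule.coe_smul, LinearMap.smul_apply,
        map_smul, Prod.smul_mk, smul_sub]
    · simp only [Prod.smul_fst, Prod.smul_snd, Submodule.coe_smul, lie_smul, map_smul,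
        LinearMap.smul_apply, Prod.smul_mk, smul_sub, smul_add]
    · simp only [Prod.smul_fst, Prod.smul_snd, Submodule.coe_smul, LinearMap.smul_apply,
        map_smul, Prod.smul_mk, smul_sub]
  · intro x
    refine Prod.ext ?_ (Prod.ext (Subtype.ext ?_) ?_) <;> simp
  · -- Jacobi
    have hkey' : ∀ X ∈ I, ∀ c f, ⁅N c f, X⁆ = -(N (X.1 c) f) - N c (X.2 f) := by
      intro X hX c f
      rw [← lie_skew, hkey X hX]
      abel
    rintro ⟨a, X, b⟩ ⟨c, Y, d⟩ ⟨e, Z, f⟩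
    refine Prod.ext ?_ (Prod.ext (Subtype.ext ?_) ?_)
    · simp only [N, hbr, LinearMap.mk₂_apply, Ring.lie_def, Prod.fst_add, Prod.fst_sub,
        Prod.snd_add, Prod.snd_sub, Prod.fst_neg, Prod.snd_neg, LinearMap.sub_apply,
        LinearMap.add_apply, LinearMap.neg_apply, Module.End.mul_apply, map_add, map_sub,
        map_neg]
      rw [symm_m c f a, symm_m e d a, symm_m c b e]
      abel
    · show ⁅(X : Module.End k Pm × Module.End k Pp), ⁅(Y : Module.End k Pm × Module.End k Pp), (Z : Module.End k Pm × Module.End k Pp)⁆ + N c f - N e d⁆ + N a ((Y : Module.End k Pm × Module.End k Pp).2 f - (Z : Module.End k Pm × Module.End k Pp).2 d) - N ((Y : Module.End k Pm × Module.End k Pp).1 e - (Z : Module.End k Pm × Module.End k Pp).1 c) b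
        = (⁅⁅(X : Module.End k Pm × Module.End k Pp), (Y : Module.End k Pm × Module.End k Pp)⁆ + N a d - N c b, (Z : Module.End k Pm × Module.End k Pp)⁆ + N ((X : Module.End k Pm × Module.End k Pp).1 c - (Y : Module.End k Pm × Module.End k Pp).1 a) f - N e ((X : Module.End k Pm × Module.End k Pp).2 d - (Y : Module.End k Pm × Module.End k Pp).2 b))
          + (⁅(Y : Module.End k Pm × Module.End k Pp), ⁅(X : Module.End k Pm × Module.End k Pp), (Z : Module.End k Pm × Module.End k Pp)⁆ + N a f - N e b⁆ + N c ((X : Module.End k Pm × Module.End k Pp).2 f - (Z : Module.End k Pm × Module.End k Pp).2 b) - N ((X : Module.End k Pm × Module.End k Pp).1 e - (Z : Module.End k Pm × Module.End k Pp).1 a) d)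
      simp only [lie_add, lie_sub, add_lie, sub_lie, map_add, map_sub,
        LinearMap.add_apply, LinearMap.sub_apply]
      rw [leibniz_lie, hkey _ X.2 c f, hkey _ X.2 e d, hkey _ Y.2 a f, hkey _ Y.2 e b,
        hkey' _ Z.2 a d, hkey' _ Z.2 c b]
      abel
    · simp only [N, hbr, LinearMap.mk₂_apply, Ring.lie_def, Prod.fst_add, Prod.fst_sub,
        Prod.snd_add, Prod.snd_sub, Prod.fst_neg, Prod.snd_neg, LinearMap.sub_apply,
        LinearMap.add_apply, LinearMap.neg_apply, Module.End.mul_apply, map_add, map_sub,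
        map_neg]
      rw [symm_p f c b, symm_p d e b, symm_p d a f]
      abel
end

section
/- Let M be a module over a Lie algebra L and λ : M → L an L-module epimorphism (where L acts on itself adjointly). Then A(M) = span{λ(m)·m : m ∈ M} is an L-submodule of M, the quotient Q = M/A(M) carries a Lie algebra structure with bracket [p,q] = μ(p)·q (where μ : Q → L is induced by λ), and μ : Q → L is a central extension of Lie algebras (a surjective Lie homomorphism with kernel contained in the center of Q). -/
/-- If `M` is a module over a Lie algebra `L` and `l : M → L` is
an `L`-module epimorphism onto the adjoint module, then
`A(M) = span{l(m)·m}` is an `L`-submodule of `M`, the quotient `Q = M/A(M)`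
carries a Lie algebra bracket `[p,q] = μ(p)·q` where `μ : Q → L` is induced by
`l`, and `μ` is a central extension. -/
theorem stmt7 {k : Type*} [CommRing k]
    (htor2 : ∀ x : k, 2 * x = 0 → x = 0) (htor3 : ∀ x : k, 3 * x = 0 → x = 0)
    {L : Type*} [LieRing L] [LieAlgebra k L]
    {M : Type*} [AddCommGroup M] [Module k M] [LieRingModule L M] [LieModule k L M]
    (l : M →ₗ[k] L)
    (hl : ∀ (x : L) (m : M), l ⁅x, m⁆ = ⁅x, l m⁆)
    (hsurj : Function.Surjective l)
    (A : Submodule k M)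
    (hA : A = Submodule.span k {m | ∃ n : M, m = ⁅l n, n⁆}) :
    -- A(M) is an L-submodule of M
    (∀ x : L, ∀ m ∈ A, ⁅x, m⁆ ∈ A) ∧
    -- μ : M/A(M) → L induced by l, the bracket [p,q] = μ(p)·q on M/A(M)
    (∃ μ : (M ⧸ A) →ₗ[k] L,
      (∀ m : M, μ (Submodule.Quotient.mk m) = l m) ∧
      Function.Surjective μ ∧
      ∃ B : (M ⧸ A) → (M ⧸ A) → (M ⧸ A),
        (∀ m n : M, B (Submodule.Quotient.mk m) (Submodule.Quotient.mk n)
          = Submodule.Quotient.mk ⁅l m, n⁆) ∧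
        -- Q is a Lie algebra
        IsLieBracket (k := k) B ∧
        -- μ is a Lie algebra homomorphism
        (∀ p q, μ (B p q) = ⁅μ p, μ q⁆) ∧
        -- the kernel of μ is central in Q
        (∀ p, μ p = 0 → ∀ q, B p q = 0 ∧ B q p = 0)) := by

  have hmem : ∀ n : M, ⁅l n, n⁆ ∈ A := fun n => hA ▸ Submodule.subset_span ⟨n, rfl⟩
  have hpol : ∀ m n : M, ⁅l m, n⁆ + ⁅l n, m⁆ ∈ A := by
    intro m n
    have h := Submodule.sub_mem _ (Submodule.sub_mem _ (hmem (m + n)) (hmem m)) (hmem n)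
    have e : ⁅l (m + n), m + n⁆ - ⁅l m, m⁆ - ⁅l n, n⁆ = ⁅l m, n⁆ + ⁅l n, m⁆ := by
      rw [map_add, add_lie, lie_add, lie_add]; abel
    rwa [e] at h
  have hinv : ∀ x : L, ∀ m ∈ A, ⁅x, m⁆ ∈ A := by
    intro x m hm
    rw [hA] at hm
    induction hm using Submodule.span_induction with
    | mem a ha =>
        obtain ⟨n, rfl⟩ := ha
        have e : ⁅x, ⁅l n, n⁆⁆ = ⁅l ⁅x, n⁆, n⁆ + ⁅l n, ⁅x, n⁆⁆ := by
          rw [leibniz_lie, ← hl]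
        rw [e]; exact hpol _ _
    | zero => simp
    | add a b _ _ ha hb => rw [lie_add]; exact Submodule.add_mem _ ha hb
    | smul c a _ ha => rw [lie_smul]; exact Submodule.smul_mem _ _ ha
  have hker : A ≤ LinearMap.ker l := by
    rw [hA, Submodule.span_le]
    rintro m ⟨n, rfl⟩
    simp [LinearMap.mem_ker, hl]
  set μ : (M ⧸ A) →ₗ[k] L := A.liftQ l hker with hμ
  have hμmk : ∀ m : M, μ (Submodule.Quotient.mk m) = l m := fun m => rfl
  set act : L → (M ⧸ A) →ₗ[k] (M ⧸ A) := fun x =>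
    Submodule.mapQ A A
      { toFun := fun m => ⁅x, m⁆
        map_add' := lie_add x
        map_smul' := fun c m => lie_smul c x m }
      (fun m hm => hinv x m hm) with hact
  set B : (M ⧸ A) → (M ⧸ A) → (M ⧸ A) := fun p q => act (μ p) q with hBdef
  have hB : ∀ m n : M, B (Submodule.Quotient.mk m) (Submodule.Quotient.mk n)
      = Submodule.Quotient.mk ⁅l m, n⁆ := by
    intro m n
    simp only [hBdef, hμmk, hact, Submodule.mapQ_apply]
    rfl
  have hs : Function.Surjective (Submodule.Quotient.mk : M → M ⧸ A) :=
    Submodule.Quotient.mk_surjective A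
  refine ⟨hinv, μ, hμmk, ?_, B, hB, ⟨?_, ?_, ?_, ?_, ?_, ?_⟩, ?_, ?_⟩
  · intro x
    obtain ⟨m, rfl⟩ := hsurj x
    exact ⟨Submodule.Quotient.mk m, hμmk m⟩
  · intro p q r
    obtain ⟨m, rfl⟩ := hs p; obtain ⟨m', rfl⟩ := hs q; obtain ⟨n, rfl⟩ := hs r
    rw [← Submodule.Quotient.mk_add, hB, hB, hB, ← Submodule.Quotient.mk_add,
      map_add, add_lie]
  · intro p q r
    obtain ⟨m, rfl⟩ := hs p; obtain ⟨n, rfl⟩ := hs q; obtain ⟨n', rfl⟩ := hs r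
    rw [← Submodule.Quotient.mk_add, hB, hB, hB, ← Submodule.Quotient.mk_add,
      lie_add]
  · intro c p q
    obtain ⟨m, rfl⟩ := hs p; obtain ⟨n, rfl⟩ := hs q
    rw [← Submodule.Quotient.mk_smul, hB, hB, ← Submodule.Quotient.mk_smul,
      map_smul, smul_lie]
  · intro c p q
    obtain ⟨m, rfl⟩ := hs p; obtain ⟨n, rfl⟩ := hs q
    rw [← Submodule.Quotient.mk_smul, hB, hB, ← Submodule.Quotient.mk_smul,
      lie_smul]
  · intro p
    obtain ⟨m, rfl⟩ := hs p
    rw [hB, Submodule.Quotient.mk_eq_zero]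
    exact hmem m
  · intro p q r
    obtain ⟨m, rfl⟩ := hs p; obtain ⟨n, rfl⟩ := hs q; obtain ⟨n', rfl⟩ := hs r
    rw [hB, hB, hB, hB, hB, hB, ← Submodule.Quotient.mk_add]
    congr 1
    rw [hl, leibniz_lie]
  · intro p q
    obtain ⟨m, rfl⟩ := hs p; obtain ⟨n, rfl⟩ := hs q
    rw [hB, hμmk, hμmk, hμmk, hl]
  · intro p hp q
    obtain ⟨m, rfl⟩ := hs p; obtain ⟨n, rfl⟩ := hs q
    rw [hμmk] at hp
    constructor
    · rw [hB, hp, zero_lie, Submodule.Quotient.mk_zero]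
    · rw [hB, Submodule.Quotient.mk_eq_zero]
      have := hpol m n
      rwa [hp, zero_lie, zero_add] at this
end

section
/- Let T be a Jordan triple system and P = (T,T) the associated Jordan pair. Then the map κ̂ on ûTKK(P) = T₋ ⊕ ⟨T,T⟩ ⊕ T₊ defined by κ̂(a₋ + ⟨c,d⟩ + b₊) = b₋ - ⟨d,c⟩ + a₊ is a well-defined anti-graded involution of the Lie algebra ûTKK(P): a Lie algebra automorphism of order 2 taking the component of degree i to the component of degree -i. -/
open scoped TensorProduct

/-- For a Jordan triple system `T` and the associated Jordan
pair `P = (T,T)`, the map `κ̂(a₋ + ⟨c,d⟩ + b₊) = b₋ - ⟨d,c⟩ + a₊` is a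
well-defined anti-graded involution of the Lie algebra `ûTKK(P)`: a Lie
algebra automorphism of order 2 taking degree `i` to degree `-i`. -/
theorem stmt10 {k : Type*} [CommRing k]
    (htor2 : ∀ x : k, 2 * x = 0 → x = 0) (htor3 : ∀ x : k, 3 * x = 0 → x = 0)
    {T : Type*} [AddCommGroup T] [Module k T]
    (t : T →ₗ[k] T →ₗ[k] T →ₗ[k] T)
    (hsymm : ∀ a b c, t a b c = t c b a)
    (hjid : ∀ a b c d x, t a b (t c d x) - t c d (t a b x)
      = t (t a b c) d x - t c (t b a d) x)
    -- A(T ⊗ T) and ⟨T,T⟩ = (T⊗T)/A(T⊗T)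
    (A : Submodule k (T ⊗[k] T))
    (hA : A = Submodule.span k {x | ∃ a c b d : T,
      x = (t a b c ⊗ₜ[k] d - c ⊗ₜ[k] t b a d)
        + (t c d a ⊗ₜ[k] b - a ⊗ₜ[k] t d c b)})
    -- the Lie bracket of ûTKK(P) = T₋ × ⟨T,T⟩ × T₊, specified on generators
    (B : (T × ((T ⊗[k] T) ⧸ A) × T) → (T × ((T ⊗[k] T) ⧸ A) × T) →
         (T × ((T ⊗[k] T) ⧸ A) × T))
    (hB : IsLieBracket (k := k) B)
    (hBmm : ∀ a c : T, B (a, 0, 0) (c, 0, 0) = 0)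
    (hBpp : ∀ b d : T, B (0, 0, b) (0, 0, d) = 0)
    (hBmp : ∀ a b : T, B (a, 0, 0) (0, 0, b)
      = (0, Submodule.Quotient.mk (a ⊗ₜ[k] b), 0))
    (hBzm : ∀ a b c : T, B (0, Submodule.Quotient.mk (a ⊗ₜ[k] b), 0) (c, 0, 0)
      = (t a b c, 0, 0))
    (hBzp : ∀ a b d : T, B (0, Submodule.Quotient.mk (a ⊗ₜ[k] b), 0) (0, 0, d)
      = (0, 0, -(t b a d)))
    (hBzz : ∀ a b c d : T,
      B (0, Submodule.Quotient.mk (a ⊗ₜ[k] b), 0)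
        (0, Submodule.Quotient.mk (c ⊗ₜ[k] d), 0)
      = (0, Submodule.Quotient.mk (t a b c ⊗ₜ[k] d)
            - Submodule.Quotient.mk (c ⊗ₜ[k] t b a d), 0)) :
    -- κ̂ exists as a linear map, is an involution, is anti-graded, and is a
    -- Lie algebra automorphism
    ∃ κ : (T × ((T ⊗[k] T) ⧸ A) × T) →ₗ[k] (T × ((T ⊗[k] T) ⧸ A) × T),
      (∀ a : T, κ (a, 0, 0) = (0, 0, a)) ∧
      (∀ b : T, κ (0, 0, b) = (b, 0, 0)) ∧
      (∀ c d : T, κ (0, Submodule.Quotient.mk (c ⊗ₜ[k] d), 0)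
        = (0, -Submodule.Quotient.mk (d ⊗ₜ[k] c), 0)) ∧
      (∀ X : (T ⊗[k] T) ⧸ A, (κ (0, X, 0)).1 = 0 ∧ (κ (0, X, 0)).2.2 = 0) ∧
      (∀ p, κ (κ p) = p) ∧
      (∀ p q, κ (B p q) = B (κ p) (κ q)) := by
  obtain ⟨hadd1, hadd2, hsmul1, hsmul2, halt, _⟩ := hB
  -- basic bracket facts
  have hB0l : ∀ q, B 0 q = 0 := by
    intro q; have h := hsmul1 (0 : k) 0 q; simpa using h
  have hB0r : ∀ p, B p 0 = 0 := by
    intro p; have h := hsmul2 (0 : k) p 0; simpa using h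
  have hBswap : ∀ p q, B q p = -B p q := by
    intro p q
    have h := halt (p + q)
    rw [hadd1, hadd2, hadd2, halt p, halt q] at h
    have h' : B p q + B q p = 0 := by
      have := h; simp only [zero_add, add_zero] at this; exact this
    exact eq_neg_of_add_eq_zero_left (by rw [add_comm]; exact h')
  have hBnegL : ∀ p q, B (-p) q = -B p q := by
    intro p q; have h := hsmul1 (-1 : k) p q
    simpa [neg_one_smul] using h
  have hBnegR : ∀ p q, B p (-q) = -B p q := by
    intro p q; have h := hsmul2 (-1 : k) p q
    simpa [neg_one_smul] using h
  -- the swap-with-sign map on T ⊗ T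
  set σ : T ⊗[k] T →ₗ[k] T ⊗[k] T := -(TensorProduct.comm k T T).toLinearMap
    with hσdef
  have hσ : ∀ c d : T, σ (c ⊗ₜ[k] d) = -(d ⊗ₜ[k] c) := by
    intro c d; simp [hσdef]
  have hσσ : ∀ x, σ (σ x) = x := by
    intro x
    induction x using TensorProduct.induction_on with
    | zero => simp
    | tmul a b => rw [hσ, map_neg, hσ, neg_neg]
    | add x y hx hy => rw [map_add, map_add, hx, hy]
  have hσA : A ≤ A.comap σ := by
    conv_lhs => rw [hA]
    rw [Submodule.span_le]
    rintro x ⟨a, c, b, d, rfl⟩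
    rw [SetLike.mem_coe, Submodule.mem_comap]
    have hx : σ ((t a b c ⊗ₜ[k] d - c ⊗ₜ[k] t b a d)
        + (t c d a ⊗ₜ[k] b - a ⊗ₜ[k] t d c b))
        = (t b a d ⊗ₜ[k] c - d ⊗ₜ[k] t a b c)
          + (t d c b ⊗ₜ[k] a - b ⊗ₜ[k] t c d a) := by
      rw [map_add, map_sub, map_sub, hσ, hσ, hσ, hσ]; abel
    rw [hx, hA]
    exact Submodule.subset_span ⟨b, d, a, c, rfl⟩
  -- induced map on the quotient
  set κQ : ((T ⊗[k] T) ⧸ A) →ₗ[k] ((T ⊗[k] T) ⧸ A) := Submodule.mapQ A A σ hσA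
    with hκQdef
  have hκQ : ∀ x : T ⊗[k] T, κQ (Submodule.Quotient.mk x)
      = Submodule.Quotient.mk (σ x) := by
    intro x
    have h := Submodule.mapQ_mkQ A A σ (h := hσA)
    have h2 := LinearMap.congr_fun h x
    simpa [hκQdef, Submodule.mkQ_apply] using h2
  have hκQinv : ∀ X, κQ (κQ X) = X := by
    intro X
    obtain ⟨x, rfl⟩ := Submodule.Quotient.mk_surjective A X
    rw [hκQ, hκQ, hσσ]
  -- the map κ
  set κ : (T × ((T ⊗[k] T) ⧸ A) × T) →ₗ[k] (T × ((T ⊗[k] T) ⧸ A) × T) :=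
    { toFun := fun p => (p.2.2, κQ p.2.1, p.1)
      map_add' := fun p q => by
        simp only [Prod.fst_add, Prod.snd_add, map_add]; rfl
      map_smul' := fun c p => by
        simp only [Prod.smul_fst, Prod.smul_snd, map_smul, RingHom.id_apply]
        rfl } with hκdef
  have hκ : ∀ (a : T) (X : (T ⊗[k] T) ⧸ A) (b : T),
      κ (a, X, b) = (b, κQ X, a) := by
    intro a X b; rfl
  have hκm : ∀ a : T, κ (a, 0, 0) = (0, 0, a) := by
    intro a; rw [hκ, map_zero]
  have hκp : ∀ b : T, κ (0, 0, b) = (b, 0, 0) := by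
    intro b; rw [hκ, map_zero]
  have hκ0 : ∀ c d : T, κ (0, Submodule.Quotient.mk (c ⊗ₜ[k] d), 0)
      = (0, -Submodule.Quotient.mk (d ⊗ₜ[k] c), 0) := by
    intro c d
    rw [hκ, hκQ, hσ]
    simp [Submodule.Quotient.mk_neg]
  have hnegmid : ∀ X : (T ⊗[k] T) ⧸ A,
      ((0 : T), -X, (0 : T)) = -((0 : T), X, (0 : T)) := by
    intro X; simp [Prod.ext_iff]
  -- the homomorphism property
  set G : (T × ((T ⊗[k] T) ⧸ A) × T) → Prop := fun p =>
    (∃ a : T, p = (a, 0, 0)) ∨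
    (∃ c d : T, p = (0, Submodule.Quotient.mk (c ⊗ₜ[k] d), 0)) ∨
    (∃ b : T, p = (0, 0, b)) with hGdef
  set good : (T × ((T ⊗[k] T) ⧸ A) × T) → (T × ((T ⊗[k] T) ⧸ A) × T) → Prop :=
    fun p q => κ (B p q) = B (κ p) (κ q) with hgooddef
  have g0l : ∀ q, good 0 q := by
    intro q; show κ (B 0 q) = B (κ 0) (κ q)
    rw [hB0l, map_zero, hB0l]
  have g0r : ∀ p, good p 0 := by
    intro p; show κ (B p 0) = B (κ p) (κ 0)
    rw [hB0r, map_zero, hB0r]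
  have gaddl : ∀ p p' q, good p q → good p' q → good (p + p') q := by
    intro p p' q h1 h2
    show κ (B (p + p') q) = B (κ (p + p')) (κ q)
    rw [hadd1, map_add, h1, h2, map_add, hadd1]
  have gaddr : ∀ p q q', good p q → good p q' → good p (q + q') := by
    intro p q q' h1 h2
    show κ (B p (q + q')) = B (κ p) (κ (q + q'))
    rw [hadd2, map_add, h1, h2, map_add, hadd2]
  have hgen : ∀ p q, G p → G q → good p q := by
    rintro p q (⟨a, rfl⟩ | ⟨c, d, rfl⟩ | ⟨b, rfl⟩)
      (⟨a', rfl⟩ | ⟨c', d', rfl⟩ | ⟨b', rfl⟩) <;>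
      show κ (B _ _) = B (κ _) (κ _)
    · -- (a,0,0) vs (a',0,0)
      rw [hBmm, map_zero, hκm, hκm, hBpp]
    · -- (a,0,0) vs mid
      rw [hBswap, hBzm, map_neg, hκm, hκm, hκ0, hnegmid, hBnegR,
        ← hBswap, hBzp]
      simp [Prod.ext_iff]
    · -- (a,0,0) vs (0,0,b')
      rw [hBmp, hκ0, hκm, hκp, hBswap, hBmp, ← hnegmid]
    · -- mid vs (a',0,0)
      rw [hBzm, hκm, hκ0, hκm, hnegmid, hBnegL, hBzp]
      simp [Prod.ext_iff]
    · -- mid vs mid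
      rw [hBzz, hκ0, hκ0, hnegmid, hnegmid, hBnegL, hBnegR, neg_neg, hBzz,
        hκ, map_sub, hκQ, hκQ, hσ, hσ]
      simp only [Submodule.Quotient.mk_neg, Prod.mk.injEq]
      refine ⟨trivial, ?_, trivial⟩
      abel
    · -- mid vs (0,0,b')
      rw [hBzp, hκp, hκ0, hκp, hnegmid, hBnegL, hBzm]
      simp [Prod.ext_iff]
    · -- (0,0,b) vs (a',0,0)
      rw [hBswap, hBmp, map_neg, hκ0, hκp, hκm, hBmp]
      simp [Prod.ext_iff]
    · -- (0,0,b) vs mid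
      rw [hBswap, hBzp, map_neg, hκp, hκp, hκ0, hnegmid, hBnegR, ← hBswap, hBzm]
      simp [Prod.ext_iff]
    · -- (0,0,b) vs (0,0,b')
      rw [hBpp, map_zero, hκp, hκp, hBmm]
  have hmidG : ∀ p, G p → ∀ y : T ⊗[k] T,
      good p (0, Submodule.Quotient.mk y, 0) := by
    intro p hp y
    induction y using TensorProduct.induction_on with
    | zero =>
      have : ((0 : T), Submodule.Quotient.mk (0 : T ⊗[k] T) (p := A), (0 : T))
          = (0 : T × ((T ⊗[k] T) ⧸ A) × T) := by
        simp [Prod.ext_iff]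
      rw [this]; exact g0r p
    | tmul c d => exact hgen p _ hp (Or.inr (Or.inl ⟨c, d, rfl⟩))
    | add x y hx hy =>
      have hsplit : ((0 : T), Submodule.Quotient.mk (x + y) (p := A), (0 : T))
          = ((0 : T), Submodule.Quotient.mk x (p := A), (0 : T))
            + ((0 : T), Submodule.Quotient.mk y (p := A), (0 : T)) := by
        simp [Prod.ext_iff, Submodule.Quotient.mk_add]
      rw [hsplit]
      exact gaddr p _ _ hx hy
  have hstepB : ∀ p, G p → ∀ q, good p q := by
    intro p hp q
    obtain ⟨c, Y, d⟩ := q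
    have hsplit : ((c : T), Y, (d : T))
        = (c, 0, 0) + (((0 : T), Y, (0 : T)) + ((0 : T), (0 : (T ⊗[k] T) ⧸ A), d)) := by
      simp [Prod.ext_iff]
    rw [hsplit]
    refine gaddr p _ _ (hgen p _ hp (Or.inl ⟨c, rfl⟩)) (gaddr p _ _ ?_ ?_)
    · obtain ⟨y, rfl⟩ := Submodule.Quotient.mk_surjective A Y
      exact hmidG p hp y
    · exact hgen p _ hp (Or.inr (Or.inr ⟨d, rfl⟩))
  have hmidG' : ∀ q, ∀ y : T ⊗[k] T,
      good (0, Submodule.Quotient.mk y, 0) q := by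
    intro q y
    induction y using TensorProduct.induction_on with
    | zero =>
      have : ((0 : T), Submodule.Quotient.mk (0 : T ⊗[k] T) (p := A), (0 : T))
          = (0 : T × ((T ⊗[k] T) ⧸ A) × T) := by
        simp [Prod.ext_iff]
      rw [this]; exact g0l q
    | tmul c d => exact hstepB _ (Or.inr (Or.inl ⟨c, d, rfl⟩)) q
    | add x y hx hy =>
      have hsplit : ((0 : T), Submodule.Quotient.mk (x + y) (p := A), (0 : T))
          = ((0 : T), Submodule.Quotient.mk x (p := A), (0 : T))
            + ((0 : T), Submodule.Quotient.mk y (p := A), (0 : T)) := by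
        simp [Prod.ext_iff, Submodule.Quotient.mk_add]
      rw [hsplit]
      exact gaddl _ _ q hx hy
  have hhom : ∀ p q, good p q := by
    intro p q
    obtain ⟨a, X, b⟩ := p
    have hsplit : ((a : T), X, (b : T))
        = (a, 0, 0) + (((0 : T), X, (0 : T)) + ((0 : T), (0 : (T ⊗[k] T) ⧸ A), b)) := by
      simp [Prod.ext_iff]
    rw [hsplit]
    refine gaddl _ _ q (hstepB _ (Or.inl ⟨a, rfl⟩) q) (gaddl _ _ q ?_ ?_)
    · obtain ⟨x, rfl⟩ := Submodule.Quotient.mk_surjective A X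
      exact hmidG' q x
    · exact hstepB _ (Or.inr (Or.inr ⟨b, rfl⟩)) q
  refine ⟨κ, hκm, hκp, hκ0, ?_, ?_, hhom⟩
  · intro X; exact ⟨rfl, rfl⟩
  · intro p
    obtain ⟨a, X, b⟩ := p
    rw [hκ, hκ, hκQinv]
end

section
/- Let J be a unital linear Jordan algebra over a field k of characteristic ≠ 2,3, viewed as the Jordan pair (J,J). Then the submodule A(J⊗J) ⊆ J⊗J (spanned by all ({a,b,c}⊗d - c⊗{b,a,d}) + ({c,d,a}⊗b - a⊗{d,c,b})) equals the k-span of the elements a²⊗a - 1⊗a³ for a ∈ J. -/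
open scoped TensorProduct

set_option maxHeartbeats 4000000

/-- For a unital linear Jordan algebra `J` over a field of
characteristic ≠ 2,3, viewed as the Jordan pair `(J,J)`, the submodule
`A(J⊗J)` (spanned by `({a,b,c}⊗d - c⊗{b,a,d}) + ({c,d,a}⊗b - a⊗{d,c,b})`)
equals the span of the elements `a²⊗a - 1⊗a³`. -/
theorem stmt12 {k : Type*} [Field k]
    (hchar2 : (2 : k) ≠ 0) (hchar3 : (3 : k) ≠ 0)
    {J : Type*} [AddCommGroup J] [Module k J]
    (m : J →ₗ[k] J →ₗ[k] J)
    (hcomm : ∀ a b, m a b = m b a)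
    (hjordan : ∀ a b, m (m (m a a) b) a = m (m a a) (m b a))
    (one : J) (hone : ∀ a, m one a = a)
    (t : J → J → J → J)
    (ht : ∀ a b c, t a b c = m (m a b) c + m a (m b c) - m b (m c a)) :
    Submodule.span k {x : J ⊗[k] J | ∃ a c b d : J,
        x = (t a b c ⊗ₜ[k] d - c ⊗ₜ[k] t b a d)
          + (t c d a ⊗ₜ[k] b - a ⊗ₜ[k] t d c b)}
      = Submodule.span k {x : J ⊗[k] J | ∃ a : J,
          x = m a a ⊗ₜ[k] a - one ⊗ₜ[k] m (m a a) a} := by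
  have hone' : ∀ x : J, m x one = x := fun x => (hcomm x one).trans (hone x)
  have hdiv : ∀ (p : Submodule k (J ⊗[k] J)) (c : k), c ≠ 0 → ∀ v : J ⊗[k] J,
      c • v ∈ p → v ∈ p := by
    intro p c hc v hv
    have h := p.smul_mem c⁻¹ hv
    rwa [smul_smul, inv_mul_cancel₀ hc, one_smul] at h
  have hLJ : ∀ w x y z : J,
      m (m (m x y) w) z + m (m (m y z) w) x + m (m (m x z) w) y = m (m w z) (m x y) + m (m w x) (m y z) + m (m w y) (m x z) := by
    intro w x y z
    have idL : (2 : k) • (m (m (m x y) w) z + m (m (m y z) w) x + m (m (m x z) w) y) = (m (m (m (x + y + z) (x + y + z)) w) (x + y + z)) - (m (m (m (x + y) (x + y)) w) (x + y)) - (m (m (m (y + z) (y + z)) w) (y + z)) - (m (m (m (x + z) (x + z)) w) (x + z)) + (m (m (m x x) w) x) + (m (m (m y y) w) y) + (m (m (m z z) w) z) := by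
      simp only [map_add, LinearMap.add_apply]
      simp only [hcomm (m x x) (m w x), hcomm (m x x) (m w y), hcomm (m x x) (m w z), hcomm (m x y) (m w x), hcomm (m x y) (m w y), hcomm (m x y) (m w z), hcomm (m x z) (m w x), hcomm (m x z) (m w y), hcomm (m x z) (m w z), hcomm (m y y) (m w x), hcomm (m y y) (m w y), hcomm (m y y) (m w z), hcomm (m y z) (m w x), hcomm (m y z) (m w y), hcomm (m y z) (m w z), hcomm (m z z) (m w x), hcomm (m z z) (m w y), hcomm (m z z) (m w z), hcomm w (m x x), hcomm w (m x y), hcomm w (m x z), hcomm w (m y y), hcomm w (m y z), hcomm w (m z z), hcomm x (m (m x x) w), hcomm x (m (m x y) w), hcomm x (m (m x z) w), hcomm x (m (m y y) w), hcomm x (m (m y z) w), hcomm x (m (m z z) w), hcomm x w, hcomm y (m (m x x) w), hcomm y (m (m x y) w), hcomm y (m (m x z) w), hcomm y (m (m y y) w), hcomm y (m (m y z) w), hcomm y (m (m z z) w), hcomm y w, hcomm y x, hcomm z (m (m x x) w), hcomm z (m (m x y) w), hcomm z (m (m x z) w), hcomm z (m (m y y) w), hcomm z (m (m y z) w), hcomm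 z (m (m z z) w), hcomm z w, hcomm z x, hcomm z y]
      module
    have idR : (2 : k) • (m (m w z) (m x y) + m (m w x) (m y z) + m (m w y) (m x z)) = (m (m (x + y + z) (x + y + z)) (m w (x + y + z))) - (m (m (x + y) (x + y)) (m w (x + y))) - (m (m (y + z) (y + z)) (m w (y + z))) - (m (m (x + z) (x + z)) (m w (x + z))) + (m (m x x) (m w x)) + (m (m y y) (m w y)) + (m (m z z) (m w z)) := by
      simp only [map_add, LinearMap.add_apply]
      simp only [hcomm (m x x) (m w x), hcomm (m x x) (m w y), hcomm (m x x) (m w z), hcomm (m x y) (m w x), hcomm (m x y) (m w y), hcomm (m x y) (m w z), hcomm (m x z) (m w x), hcomm (m x z) (m w y), hcomm (m x z) (m w z), hcomm (m y y) (m w x), hcomm (m y y) (m w y), hcomm (m y y) (m w z), hcomm (m y z) (m w x), hcomm (m y z) (m w y), hcomm (m y z) (m w z), hcomm (m z z) (m w x), hcomm (m z z) (m w y), hcomm (m z z) (m w z), hcomm w (m x x), hcomm w (m x y), hcomm w (m x z), hcomm w (m y y), hcomm w (m y z), hcomm w (m z z), hcomm x (m (m x x) w), hcomm x (m (m x y)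 w), hcomm x (m (m x z) w), hcomm x (m (m y y) w), hcomm x (m (m y z) w), hcomm x (m (m z z) w), hcomm x w, hcomm y (m (m x x) w), hcomm y (m (m x y) w), hcomm y (m (m x z) w), hcomm y (m (m y y) w), hcomm y (m (m y z) w), hcomm y (m (m z z) w), hcomm y w, hcomm y x, hcomm z (m (m x x) w), hcomm z (m (m x y) w), hcomm z (m (m x z) w), hcomm z (m (m y y) w), hcomm z (m (m y z) w), hcomm z (m (m z z) w), hcomm z w, hcomm z x, hcomm z y]
      module
    rw [hjordan (x+y+z) w, hjordan (x+y) w, hjordan (y+z) w, hjordan (x+z) w,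
        hjordan x w, hjordan y w, hjordan z w] at idL
    rw [← idR] at idL
    calc m (m (m x y) w) z + m (m (m y z) w) x + m (m (m x z) w) y = (2:k)⁻¹ • ((2:k) • (m (m (m x y) w) z + m (m (m y z) w) x + m (m (m x z) w) y)) := by
          rw [smul_smul, inv_mul_cancel₀ hchar2, one_smul]
      _ = (2:k)⁻¹ • ((2:k) • (m (m w z) (m x y) + m (m w x) (m y z) + m (m w y) (m x z))) := by rw [idL]
      _ = m (m w z) (m x y) + m (m w x) (m y z) + m (m w y) (m x z) := by rw [smul_smul, inv_mul_cancel₀ hchar2, one_smul]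
  have hT : ∀ x y z : J,
      ((m x y) ⊗ₜ[k] z + (m y z) ⊗ₜ[k] x + (m z x) ⊗ₜ[k] y - one ⊗ₜ[k] (m (m x y) z + m (m y z) x + m (m z x) y))
        ∈ Submodule.span k {v : J ⊗[k] J | ∃ a : J,
            v = m a a ⊗ₜ[k] a - one ⊗ₜ[k] m (m a a) a} := by
    intro x y z
    have hgen : ∀ u : J, (m u u ⊗ₜ[k] u - one ⊗ₜ[k] m (m u u) u)
        ∈ Submodule.span k {v : J ⊗[k] J | ∃ a : J,
            v = m a a ⊗ₜ[k] a - one ⊗ₜ[k] m (m a a) a} :=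
      fun u => Submodule.subset_span ⟨u, rfl⟩
    have idT : (2 : k) • ((m x y) ⊗ₜ[k] z + (m y z) ⊗ₜ[k] x + (m z x) ⊗ₜ[k] y - one ⊗ₜ[k] (m (m x y) z + m (m y z) x + m (m z x) y)) = ((m (x + y + z) (x + y + z)) ⊗ₜ[k] (x + y + z) - one ⊗ₜ[k] (m (m (x + y + z) (x + y + z)) (x + y + z))) - ((m (x + y) (x + y)) ⊗ₜ[k] (x + y) - one ⊗ₜ[k] (m (m (x + y) (x + y)) (x + y))) - ((m (y + z) (y + z)) ⊗ₜ[k] (y + z) - one ⊗ₜ[k] (m (m (y + z) (y + z)) (y + z))) - ((m (x + z) (x + z)) ⊗ₜ[k] (x + z) - one ⊗ₜ[k] (m (m (x + z) (x + z)) (x + z))) + ((m x x) ⊗ₜ[k] x - one ⊗ₜ[k] (m (m x x) x)) + ((m y y) ⊗ₜ[k] y - one ⊗ₜ[k] (m (m y y) y)) + ((m z z) ⊗ₜ[k] z - one ⊗ₜ[k] (m (m z z) z)) := by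
      simp only [map_add, LinearMap.add_apply, TensorProduct.add_tmul, TensorProduct.tmul_add]
      simp only [hcomm x (m x x), hcomm x (m x y), hcomm x (m x z), hcomm x (m y y), hcomm x (m y z), hcomm x (m z z), hcomm y (m x x), hcomm y (m x y), hcomm y (m x z), hcomm y (m y y), hcomm y (m y z), hcomm y (m z z), hcomm y x, hcomm z (m x x), hcomm z (m x y), hcomm z (m x z), hcomm z (m y y), hcomm z (m y z), hcomm z (m z z), hcomm z x, hcomm z y]
      module
    refine hdiv _ (2 : k) hchar2 _ ?_
    rw [idT]
    exact (Submodule.add_mem _ (Submodule.add_mem _ (Submodule.add_mem _ (Submodule.sub_mem _ (Submodule.sub_mem _ (Submodule.sub_mem _ (hgen (x+y+z)) (hgen (x+y))) (hgen (y+z))) (hgen (x+z))) (hgen x)) (hgen y)) (hgen z))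
  apply le_antisymm
  · rw [Submodule.span_le]
    rintro v ⟨a, c, b, d, rfl⟩
    have hX : ((m (m (m b c) a) d + m (m (m c d) a) b + m (m (m b d) a) c) - (m (m a d) (m b c) + m (m a b) (m c d) + m (m a c) (m b d))) - ((m (m (m a c) b) d + m (m (m c d) b) a + m (m (m a d) b) c) - (m (m b d) (m a c) + m (m b a) (m c d) + m (m b c) (m a d))) + ((m (m (m a b) c) d + m (m (m b d) c) a + m (m (m a d) c) b) - (m (m c d) (m a b) + m (m c a) (m b d) + m (m c b) (m a d))) - ((m (m (m a b) d) c + m (m (m b c) d) a + m (m (m a c) d) b) - (m (m d c) (m a b) + m (m d a) (m b c) + m (m d b) (m a c))) = 0 := by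
      rw [hLJ a b c d, hLJ b a c d, hLJ c a b d, hLJ d a b c]
      abel
    have h2 : (2 : k) • ((t a b c ⊗ₜ[k] d - c ⊗ₜ[k] t b a d)
          + (t c d a ⊗ₜ[k] b - a ⊗ₜ[k] t d c b))
        = (1 : k) • ((m (m (m a b) (m c d)) one) ⊗ₜ[k] one + (m one one) ⊗ₜ[k] (m (m a b) (m c d)) + (m one (m (m a b) (m c d))) ⊗ₜ[k] one - one ⊗ₜ[k] (m (m (m (m a b) (m c d)) one) one + m (m one one) (m (m a b) (m c d)) + m (m one (m (m a b) (m c d))) one)) + (-1 : k) • ((m (m (m a c) (m b d)) one) ⊗ₜ[k] one + (m one one) ⊗ₜ[k] (m (m a c) (m b d)) + (m one (m (m a c) (m b d))) ⊗ₜ[k] one - one ⊗ₜ[k] (m (m (m (m a c) (m b d)) one) one + m (m one one) (m (m a c) (m b d)) + m (m one (m (m a c) (m b d))) one)) + (1 : k) • ((m (m (m a d) (m b c)) one) ⊗ₜ[k] one + (m one one) ⊗ₜ[k] (m (m a d) (m b c)) + (m one (m (m a d) (m b c))) ⊗ₜ[k] one - one ⊗ₜ[k] (m (m (m (m a d) (m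 b c)) one) one + m (m one one) (m (m a d) (m b c)) + m (m one (m (m a d) (m b c))) one)) + (1 : k) • ((m (m (m (m a b) d) c) one) ⊗ₜ[k] one + (m one one) ⊗ₜ[k] (m (m (m a b) d) c) + (m one (m (m (m a b) d) c)) ⊗ₜ[k] one - one ⊗ₜ[k] (m (m (m (m (m a b) d) c) one) one + m (m one one) (m (m (m a b) d) c) + m (m one (m (m (m a b) d) c)) one)) + (1 : k) • ((m (m (m (m a d) b) c) one) ⊗ₜ[k] one + (m one one) ⊗ₜ[k] (m (m (m a d) b) c) + (m one (m (m (m a d) b) c)) ⊗ₜ[k] one - one ⊗ₜ[k] (m (m (m (m (m a d) b) c) one) one + m (m one one) (m (m (m a d) b) c) + m (m one (m (m (m a d) b) c)) one)) + (1 : k) • ((m (m (m (m b c) d) a) one) ⊗ₜ[k] one + (m one one) ⊗ₜ[k] (m (m (m b c) d) a) + (m one (m (m (m b c) d) a)) ⊗ₜ[k] one - one ⊗ₜ[k] (m (m (m (m (m b c) d) a) one) one + m (m one one) (m (m (m b c) d) a) + m (m one (m (m (m b c) d) a)) one)) + (-1 : k) • ((m (m (m (m b d) a) c) one) ⊗ₜ[k]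 one + (m one one) ⊗ₜ[k] (m (m (m b d) a) c) + (m one (m (m (m b d) a) c)) ⊗ₜ[k] one - one ⊗ₜ[k] (m (m (m (m (m b d) a) c) one) one + m (m one one) (m (m (m b d) a) c) + m (m one (m (m (m b d) a) c)) one)) + (-1 : k) • ((m (m (m (m b d) c) a) one) ⊗ₜ[k] one + (m one one) ⊗ₜ[k] (m (m (m b d) c) a) + (m one (m (m (m b d) c) a)) ⊗ₜ[k] one - one ⊗ₜ[k] (m (m (m (m (m b d) c) a) one) one + m (m one one) (m (m (m b d) c) a) + m (m one (m (m (m b d) c) a)) one)) + (1 : k) • ((m (m (m (m c d) b) a) one) ⊗ₜ[k] one + (m one one) ⊗ₜ[k] (m (m (m c d) b) a) + (m one (m (m (m c d) b) a)) ⊗ₜ[k] one - one ⊗ₜ[k] (m (m (m (m (m c d) b) a) one) one + m (m one one) (m (m (m c d) b) a) + m (m one (m (m (m c d) b) a)) one)) + (-2 : k) • ((m a (m (m b c) d)) ⊗ₜ[k] one + (m (m (m b c) d) one) ⊗ₜ[k] a + (m one a) ⊗ₜ[k] (m (m b c) d) - one ⊗ₜ[k] (m (m a (m (m b c) d)) one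 + m (m (m (m b c) d) one) a + m (m one a) (m (m b c) d))) + (2 : k) • ((m a (m (m b d) c)) ⊗ₜ[k] one + (m (m (m b d) c) one) ⊗ₜ[k] a + (m one a) ⊗ₜ[k] (m (m b d) c) - one ⊗ₜ[k] (m (m a (m (m b d) c)) one + m (m (m (m b d) c) one) a + m (m one a) (m (m b d) c))) + (-2 : k) • ((m a (m (m c d) b)) ⊗ₜ[k] one + (m (m (m c d) b) one) ⊗ₜ[k] a + (m one a) ⊗ₜ[k] (m (m c d) b) - one ⊗ₜ[k] (m (m a (m (m c d) b)) one + m (m (m (m c d) b) one) a + m (m one a) (m (m c d) b))) + (-2 : k) • ((m c (m (m a b) d)) ⊗ₜ[k] one + (m (m (m a b) d) one) ⊗ₜ[k] c + (m one c) ⊗ₜ[k] (m (m a b) d) - one ⊗ₜ[k] (m (m c (m (m a b) d)) one + m (m (m (m a b) d) one) c + m (m one c) (m (m a b) d))) + (-2 : k) • ((m c (m (m a d) b)) ⊗ₜ[k] one + (m (m (m a d) b) one) ⊗ₜ[k] c + (m one c) ⊗ₜ[k] (m (m a d) b) - one ⊗ₜ[k] (m (m c (m (m a d) b)) one + m (m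 (m (m a d) b) one) c + m (m one c) (m (m a d) b))) + (2 : k) • ((m c (m (m b d) a)) ⊗ₜ[k] one + (m (m (m b d) a) one) ⊗ₜ[k] c + (m one c) ⊗ₜ[k] (m (m b d) a) - one ⊗ₜ[k] (m (m c (m (m b d) a)) one + m (m (m (m b d) a) one) c + m (m one c) (m (m b d) a))) + (-2 : k) • ((m (m a b) (m c d)) ⊗ₜ[k] one + (m (m c d) one) ⊗ₜ[k] (m a b) + (m one (m a b)) ⊗ₜ[k] (m c d) - one ⊗ₜ[k] (m (m (m a b) (m c d)) one + m (m (m c d) one) (m a b) + m (m one (m a b)) (m c d))) + (2 : k) • ((m (m a c) (m b d)) ⊗ₜ[k] one + (m (m b d) one) ⊗ₜ[k] (m a c) + (m one (m a c)) ⊗ₜ[k] (m b d) - one ⊗ₜ[k] (m (m (m a c) (m b d)) one + m (m (m b d) one) (m a c) + m (m one (m a c)) (m b d))) + (-2 : k) • ((m (m a d) (m b c)) ⊗ₜ[k] one + (m (m b c) one) ⊗ₜ[k] (m a d) + (m one (m a d)) ⊗ₜ[k] (m b c) - one ⊗ₜ[k] (m (m (m a d) (m b c)) one + m (m (m b c)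 one) (m a d) + m (m one (m a d)) (m b c))) + (2 : k) • ((m (m a b) c) ⊗ₜ[k] d + (m c d) ⊗ₜ[k] (m a b) + (m d (m a b)) ⊗ₜ[k] c - one ⊗ₜ[k] (m (m (m a b) c) d + m (m c d) (m a b) + m (m d (m a b)) c)) + (-2 : k) • ((m (m a c) b) ⊗ₜ[k] d + (m b d) ⊗ₜ[k] (m a c) + (m d (m a c)) ⊗ₜ[k] b - one ⊗ₜ[k] (m (m (m a c) b) d + m (m b d) (m a c) + m (m d (m a c)) b)) + (2 : k) • ((m (m a d) b) ⊗ₜ[k] c + (m b c) ⊗ₜ[k] (m a d) + (m c (m a d)) ⊗ₜ[k] b - one ⊗ₜ[k] (m (m (m a d) b) c + m (m b c) (m a d) + m (m c (m a d)) b)) + (2 : k) • ((m (m b c) a) ⊗ₜ[k] d + (m a d) ⊗ₜ[k] (m b c) + (m d (m b c)) ⊗ₜ[k] a - one ⊗ₜ[k] (m (m (m b c) a) d + m (m a d) (m b c) + m (m d (m b c)) a)) + (-2 : k) • ((m (m b d) a) ⊗ₜ[k] c + (m a c) ⊗ₜ[k] (m b d) + (m c (m b d)) ⊗ₜ[k]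 a - one ⊗ₜ[k] (m (m (m b d) a) c + m (m a c) (m b d) + m (m c (m b d)) a)) + (2 : k) • ((m (m c d) a) ⊗ₜ[k] b + (m a b) ⊗ₜ[k] (m c d) + (m b (m c d)) ⊗ₜ[k] a - one ⊗ₜ[k] (m (m (m c d) a) b + m (m a b) (m c d) + m (m b (m c d)) a)) + (2 : k) • (one ⊗ₜ[k] (((m (m (m b c) a) d + m (m (m c d) a) b + m (m (m b d) a) c) - (m (m a d) (m b c) + m (m a b) (m c d) + m (m a c) (m b d))) - ((m (m (m a c) b) d + m (m (m c d) b) a + m (m (m a d) b) c) - (m (m b d) (m a c) + m (m b a) (m c d) + m (m b c) (m a d))) + ((m (m (m a b) c) d + m (m (m b d) c) a + m (m (m a d) c) b) - (m (m c d) (m a b) + m (m c a) (m b d) + m (m c b) (m a d))) - ((m (m (m a b) d) c + m (m (m b c) d) a + m (m (m a c) d) b) - (m (m d c) (m a b) + m (m d a) (m b c) + m (m d b) (m a c))))) := by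
      simp only [ht]
      simp only [TensorProduct.add_tmul, TensorProduct.tmul_add, TensorProduct.sub_tmul,
        TensorProduct.tmul_sub]
      simp only [hone, hone', hcomm (m b c) (m a d), hcomm (m b d) (m a c), hcomm (m c d) (m a b), hcomm a (m (m b c) d), hcomm a (m (m b d) c), hcomm a (m (m c d) b), hcomm a (m b c), hcomm a (m b d), hcomm a (m c d), hcomm b (m (m a c) d), hcomm b (m (m a d) c), hcomm b (m (m c d) a), hcomm b (m a c), hcomm b (m a d), hcomm b (m c d), hcomm b a, hcomm c (m (m a b) d), hcomm c (m (m a d) b), hcomm c (m (m b d) a), hcomm c (m a b), hcomm c (m a d), hcomm c (m b d), hcomm c a, hcomm c b, hcomm d (m (m a b) c), hcomm d (m (m a c) b), hcomm d (m (m b c) a), hcomm d (m a b), hcomm d (m a c), hcomm d (m b c), hcomm d a, hcomm d b, hcomm d c]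
      module
    refine hdiv _ (2 : k) hchar2 _ ?_
    rw [h2, hX, TensorProduct.tmul_zero, smul_zero, add_zero]
    exact (Submodule.add_mem _ (Submodule.add_mem _ (Submodule.add_mem _ (Submodule.add_mem _ (Submodule.add_mem _ (Submodule.add_mem _ (Submodule.add_mem _ (Submodule.add_mem _ (Submodule.add_mem _ (Submodule.add_mem _ (Submodule.add_mem _ (Submodule.add_mem _ (Submodule.add_mem _ (Submodule.add_mem _ (Submodule.add_mem _ (Submodule.add_mem _ (Submodule.add_mem _ (Submodule.add_mem _ (Submodule.add_mem _ (Submodule.add_mem _ (Submodule.add_mem _ (Submodule.add_mem _ (Submodule.add_mem _ (Submodule.smul_mem _ _ (hT (m (m a b) (m c d)) one one)) (Submodule.smul_mem _ _ (hT (m (m a c) (m b d)) one one))) (Submodule.smul_mem _ _ (hT (m (m a d) (m b c)) one one))) (Submodule.smul_mem _ _ (hT (m (m (m a b) d) c) one one))) (Submodule.smul_mem _ _ (hT (m (m (m a d) b) c) one one))) (Submodule.smul_mem _ _ (hT (m (m (m b c) d) a) one one))) (Submodule.smul_mem _ _ (hT (m (m (m b d) a) c) one one))) (Submodule.smul_mem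 _ _ (hT (m (m (m b d) c) a) one one))) (Submodule.smul_mem _ _ (hT (m (m (m c d) b) a) one one))) (Submodule.smul_mem _ _ (hT a (m (m b c) d) one))) (Submodule.smul_mem _ _ (hT a (m (m b d) c) one))) (Submodule.smul_mem _ _ (hT a (m (m c d) b) one))) (Submodule.smul_mem _ _ (hT c (m (m a b) d) one))) (Submodule.smul_mem _ _ (hT c (m (m a d) b) one))) (Submodule.smul_mem _ _ (hT c (m (m b d) a) one))) (Submodule.smul_mem _ _ (hT (m a b) (m c d) one))) (Submodule.smul_mem _ _ (hT (m a c) (m b d) one))) (Submodule.smul_mem _ _ (hT (m a d) (m b c) one))) (Submodule.smul_mem _ _ (hT (m a b) c d))) (Submodule.smul_mem _ _ (hT (m a c) b d))) (Submodule.smul_mem _ _ (hT (m a d) b c))) (Submodule.smul_mem _ _ (hT (m b c) a d))) (Submodule.smul_mem _ _ (hT (m b d) a c))) (Submodule.smul_mem _ _ (hT (m c d) a b)))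
  · rw [Submodule.span_le]
    rintro v ⟨a, rfl⟩
    have h3 : (3 : k) • (m a a ⊗ₜ[k] a - one ⊗ₜ[k] m (m a a) a)
        = (2 : k) • ((t a a one) ⊗ₜ[k] a - one ⊗ₜ[k] (t a a a) + ((t one a a) ⊗ₜ[k] a - a ⊗ₜ[k] (t a one a))) + (-1 : k) • ((t a one a) ⊗ₜ[k] a - a ⊗ₜ[k] (t one a a) + ((t a a a) ⊗ₜ[k] one - a ⊗ₜ[k] (t a a one))) + ((t (m (m a a) a) one one) ⊗ₜ[k] one - one ⊗ₜ[k] (t one (m (m a a) a) one) + ((t one one (m (m a a) a)) ⊗ₜ[k] one - (m (m a a) a) ⊗ₜ[k] (t one one one))) := by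
      simp only [ht]
      simp only [TensorProduct.add_tmul, TensorProduct.tmul_add, TensorProduct.sub_tmul,
        TensorProduct.tmul_sub]
      simp only [hone, hone', hcomm a (m a a)]
      module
    refine hdiv _ (3 : k) hchar3 _ ?_
    rw [h3]
    exact (Submodule.add_mem _ (Submodule.add_mem _ (Submodule.smul_mem _ _ (Submodule.subset_span ⟨a, one, a, a, rfl⟩)) (Submodule.smul_mem _ _ (Submodule.subset_span ⟨a, a, one, a, rfl⟩))) (Submodule.subset_span ⟨(m (m a a) a), one, one, one, rfl⟩))
end

section
/- Let P be a Jordan pair, L a 3-graded Lie algebra, and γ = (γ₋, γ₊) : P → (L₋₁, L₁) a Jordan pair homomorphism into the Jordan pair induced on (L₋₁, L₁). Then there is a unique graded Lie algebra homomorphism γ̂ : ûTKK(P) → L with γ̂|_{P₋} = γ₋ and γ̂|_{P₊} = γ₊; it is given by γ̂(a + Σᵢ⟨cᵢ,dᵢ⟩ + b) = γ₋(a) + Σᵢ[γ₋(cᵢ), γ₊(dᵢ)] + γ₊(b). -/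
open scoped TensorProduct

/-- A 3-grading `L = Lm ⊕ Lz ⊕ Lp` (degrees -1, 0, 1) of a Lie algebra `L`. -/
structure IsGrading3 (k : Type*) [CommRing k] (L : Type*) [LieRing L] [LieAlgebra k L]
    (Lm Lz Lp : Submodule k L) : Prop where
  decomp : ∀ x : L, ∃ a ∈ Lm, ∃ b ∈ Lz, ∃ c ∈ Lp, x = a + b + c
  indep : ∀ a ∈ Lm, ∀ b ∈ Lz, ∀ c ∈ Lp, a + b + c = 0 → a = 0 ∧ b = 0 ∧ c = 0
  mm : ∀ x ∈ Lm, ∀ y ∈ Lm, ⁅x, y⁆ = 0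
  pp : ∀ x ∈ Lp, ∀ y ∈ Lp, ⁅x, y⁆ = 0
  mz : ∀ x ∈ Lm, ∀ y ∈ Lz, ⁅x, y⁆ ∈ Lm
  pz : ∀ x ∈ Lp, ∀ y ∈ Lz, ⁅x, y⁆ ∈ Lp
  zz : ∀ x ∈ Lz, ∀ y ∈ Lz, ⁅x, y⁆ ∈ Lz
  mp : ∀ x ∈ Lm, ∀ y ∈ Lp, ⁅x, y⁆ ∈ Lz

/-- For a Jordan pair `P`, a 3-graded Lie algebra `L`, and a
Jordan pair homomorphism `γ = (γ₋, γ₊) : P → (L₋₁, L₁)`, there is a unique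
graded Lie algebra homomorphism `γ̂ : ûTKK(P) → L` extending `γ`; it is given
by `γ̂(a + Σ⟨cᵢ,dᵢ⟩ + b) = γ₋(a) + Σ[γ₋(cᵢ), γ₊(dᵢ)] + γ₊(b)`. -/
theorem stmt14 {k : Type*} [CommRing k]
    {Pm Pp : Type*} [AddCommGroup Pm] [AddCommGroup Pp] [Module k Pm] [Module k Pp]
    (tm : Pm →ₗ[k] Pp →ₗ[k] Pm →ₗ[k] Pm)
    (tp : Pp →ₗ[k] Pm →ₗ[k] Pp →ₗ[k] Pp)
    (symm_m : ∀ a b c, tm a b c = tm c b a)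
    (symm_p : ∀ b a d, tp b a d = tp d a b)
    (jid_m : ∀ a b c d x, tm a b (tm c d x) - tm c d (tm a b x)
      = tm (tm a b c) d x - tm c (tp b a d) x)
    (jid_p : ∀ b a d c y, tp b a (tp d c y) - tp d c (tp b a y)
      = tp (tp b a d) c y - tp d (tm a b c) y)
    (A : Submodule k (Pm ⊗[k] Pp))
    (hA : A = Submodule.span k {x | ∃ a c : Pm, ∃ b d : Pp,
      x = (tm a b c ⊗ₜ[k] d - c ⊗ₜ[k] tp b a d)
        + (tm c d a ⊗ₜ[k] b - a ⊗ₜ[k] tp d c b)})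
    -- the Lie bracket of ûTKK(P) = P₋ × ⟨P₋,P₊⟩ × P₊, specified on generators
    (B : (Pm × ((Pm ⊗[k] Pp) ⧸ A) × Pp) → (Pm × ((Pm ⊗[k] Pp) ⧸ A) × Pp) →
         (Pm × ((Pm ⊗[k] Pp) ⧸ A) × Pp))
    (hB : IsLieBracket (k := k) B)
    (hBmm : ∀ a c : Pm, B (a, 0, 0) (c, 0, 0) = 0)
    (hBpp : ∀ b d : Pp, B (0, 0, b) (0, 0, d) = 0)
    (hBmp : ∀ (a : Pm) (b : Pp), B (a, 0, 0) (0, 0, b)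
      = (0, Submodule.Quotient.mk (a ⊗ₜ[k] b), 0))
    (hBzm : ∀ (a c : Pm) (b : Pp),
      B (0, Submodule.Quotient.mk (a ⊗ₜ[k] b), 0) (c, 0, 0) = (tm a b c, 0, 0))
    (hBzp : ∀ (a : Pm) (b d : Pp),
      B (0, Submodule.Quotient.mk (a ⊗ₜ[k] b), 0) (0, 0, d) = (0, 0, -(tp b a d)))
    (hBzz : ∀ (a c : Pm) (b d : Pp),
      B (0, Submodule.Quotient.mk (a ⊗ₜ[k] b), 0)
        (0, Submodule.Quotient.mk (c ⊗ₜ[k] d), 0)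
      = (0, Submodule.Quotient.mk (tm a b c ⊗ₜ[k] d)
            - Submodule.Quotient.mk (c ⊗ₜ[k] tp b a d), 0))
    -- the 3-graded Lie algebra L
    {L : Type*} [LieRing L] [LieAlgebra k L]
    (Lm Lz Lp : Submodule k L) (hgr : IsGrading3 k L Lm Lz Lp)
    -- the Jordan pair homomorphism γ = (γ₋, γ₊) : P → (L₋₁, L₁)
    (γm : Pm →ₗ[k] L) (γp : Pp →ₗ[k] L)
    (hγm : ∀ a, γm a ∈ Lm) (hγp : ∀ b, γp b ∈ Lp)
    (hhomm : ∀ a b c, γm (tm a b c) = ⁅⁅γm a, γp b⁆, γm c⁆)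
    (hhomp : ∀ b a d, γp (tp b a d) = ⁅⁅γp b, γm a⁆, γp d⁆) :
    -- there is a unique graded Lie algebra homomorphism extending γ ...
    (∃! γh : (Pm × ((Pm ⊗[k] Pp) ⧸ A) × Pp) →ₗ[k] L,
      (∀ p q, γh (B p q) = ⁅γh p, γh q⁆) ∧
      (∀ X : (Pm ⊗[k] Pp) ⧸ A, γh (0, X, 0) ∈ Lz) ∧
      (∀ a : Pm, γh (a, 0, 0) = γm a) ∧
      (∀ b : Pp, γh (0, 0, b) = γp b)) ∧
    -- ... and it is given by the formula of the theorem
    (∀ γh : (Pm × ((Pm ⊗[k] Pp) ⧸ A) × Pp) →ₗ[k] L,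
      ((∀ p q, γh (B p q) = ⁅γh p, γh q⁆) ∧
       (∀ X : (Pm ⊗[k] Pp) ⧸ A, γh (0, X, 0) ∈ Lz) ∧
       (∀ a : Pm, γh (a, 0, 0) = γm a) ∧
       (∀ b : Pp, γh (0, 0, b) = γp b)) →
      ∀ (c : Pm) (d : Pp),
        γh (0, Submodule.Quotient.mk (c ⊗ₜ[k] d), 0) = ⁅γm c, γp d⁆) := by

  obtain ⟨Badd_l, Badd_r, Bsmul_l, Bsmul_r, Balt, Bleib⟩ := hB
  have Bzero_l : ∀ q, B 0 q = 0 := by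
    intro q
    have h := Badd_l 0 0 q
    rw [add_zero] at h
    exact (add_eq_left.mp h.symm)
  have Bzero_r : ∀ p, B p 0 = 0 := by
    intro p
    have h := Badd_r p 0 0
    rw [add_zero] at h
    exact (add_eq_left.mp h.symm)
  have Banti : ∀ p q, B p q = - B q p := by
    intro p q
    have h := Balt (p + q)
    rw [Badd_l, Badd_r, Badd_r, Balt, Balt, zero_add, add_zero] at h
    exact eq_neg_of_add_eq_zero_left h
  have lieid : ∀ A B C D : L, ⁅⁅⁅A,B⁆,C⁆,D⁆ - ⁅C,⁅⁅B,A⁆,D⁆⁆ = ⁅⁅A,B⁆,⁅C,D⁆⁆ := by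
    intro A B C D
    rw [← lie_skew B A, neg_lie, lie_neg, sub_neg_eq_add, leibniz_lie,
      ← lie_skew ⁅A,B⁆ C, neg_lie]
    abel
  set β : Pm →ₗ[k] Pp →ₗ[k] L := LinearMap.mk₂ k (fun a b => ⁅γm a, γp b⁆)
    (fun a a' b => by simp [add_lie]) (fun c a b => by simp [smul_lie])
    (fun a b b' => by simp [lie_add]) (fun c a b => by simp [lie_smul]) with hβ
  set φ : Pm ⊗[k] Pp →ₗ[k] L := TensorProduct.lift β with hφ
  have φtmul : ∀ (a : Pm) (b : Pp), φ (a ⊗ₜ[k] b) = ⁅γm a, γp b⁆ := fun a b => by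
    simp [hφ, hβ]
  have hker : A ≤ LinearMap.ker φ := by
    rw [hA, Submodule.span_le]
    rintro x ⟨a, c, b, d, rfl⟩
    simp only [SetLike.mem_coe, LinearMap.mem_ker, map_add, map_sub, φtmul]
    rw [hhomm, hhomm, hhomp, hhomp, lieid, lieid, ← lie_skew]
    abel
  set ψ : ((Pm ⊗[k] Pp) ⧸ A) →ₗ[k] L := A.liftQ φ hker with hψ
  have ψmk : ∀ t : Pm ⊗[k] Pp, ψ (Submodule.Quotient.mk t) = φ t := fun t => by
    simp [hψ]
  set γh : (Pm × ((Pm ⊗[k] Pp) ⧸ A) × Pp) →ₗ[k] L :=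
    γm.comp (LinearMap.fst k Pm _) +
    ψ.comp ((LinearMap.fst k _ Pp).comp (LinearMap.snd k Pm _)) +
    γp.comp ((LinearMap.snd k _ Pp).comp (LinearMap.snd k Pm _)) with hγhdef
  have γhval : ∀ (a : Pm) (X : (Pm ⊗[k] Pp) ⧸ A) (b : Pp),
      γh (a, X, b) = γm a + ψ X + γp b := by
    intro a X b; simp [hγhdef]
  have γhm : ∀ a : Pm, γh (a, 0, 0) = γm a := by intro a; simp [γhval]
  have γhp : ∀ b : Pp, γh (0, 0, b) = γp b := by intro b; simp [γhval]
  have γhz : ∀ X, γh (0, X, 0) = ψ X := by intro X; simp [γhval]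
  have γhzt : ∀ (c : Pm) (d : Pp),
      γh (0, Submodule.Quotient.mk (c ⊗ₜ[k] d), 0) = ⁅γm c, γp d⁆ := by
    intro c d; rw [γhz, ψmk, φtmul]
  have grading : ∀ X, γh (0, X, 0) ∈ Lz := by
    intro X
    obtain ⟨t, rfl⟩ := Submodule.Quotient.mk_surjective A X
    rw [γhz, ψmk]
    induction t using TensorProduct.induction_on with
    | zero => simpa using Lz.zero_mem
    | tmul c d => rw [φtmul]; exact hgr.mp _ (hγm c) _ (hγp d)
    | add s t hs ht => rw [map_add]; exact Lz.add_mem hs ht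
  set G : Set (Pm × ((Pm ⊗[k] Pp) ⧸ A) × Pp) :=
    {p | (∃ a : Pm, p = (a, 0, 0)) ∨
      (∃ (c : Pm) (d : Pp), p = (0, Submodule.Quotient.mk (c ⊗ₜ[k] d), 0)) ∨
      (∃ b : Pp, p = (0, 0, b))} with hG
  have hclos : ∀ p, p ∈ AddSubmonoid.closure G := by
    rintro ⟨a, X, b⟩
    have h1 : ((a, 0, 0) : Pm × ((Pm ⊗[k] Pp) ⧸ A) × Pp) ∈ AddSubmonoid.closure G :=
      AddSubmonoid.subset_closure (Or.inl ⟨a, rfl⟩)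
    have h3 : (((0 : Pm), (0 : (Pm ⊗[k] Pp) ⧸ A), b)) ∈ AddSubmonoid.closure G :=
      AddSubmonoid.subset_closure (Or.inr (Or.inr ⟨b, rfl⟩))
    have h2 : (((0 : Pm), X, (0 : Pp))) ∈ AddSubmonoid.closure G := by
      obtain ⟨t, rfl⟩ := Submodule.Quotient.mk_surjective A X
      induction t using TensorProduct.induction_on with
      | zero => rw [Submodule.Quotient.mk_zero]; exact (AddSubmonoid.closure G).zero_mem
      | tmul c d => exact AddSubmonoid.subset_closure (Or.inr (Or.inl ⟨c, d, rfl⟩))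
      | add s t hs ht =>
        have he : (((0 : Pm), Submodule.Quotient.mk (s + t), (0 : Pp))
              : Pm × ((Pm ⊗[k] Pp) ⧸ A) × Pp)
            = ((0 : Pm), Submodule.Quotient.mk s, (0 : Pp))
              + ((0 : Pm), Submodule.Quotient.mk t, (0 : Pp)) := by
          simp [Prod.ext_iff]
        rw [he]; exact (AddSubmonoid.closure G).add_mem hs ht
    have he : ((a, X, b) : Pm × ((Pm ⊗[k] Pp) ⧸ A) × Pp)
        = (a, 0, 0) + ((0 : Pm), X, (0 : Pp)) + ((0 : Pm), (0 : (Pm ⊗[k] Pp) ⧸ A), b) := by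
      simp [Prod.ext_iff]
    rw [he]
    exact (AddSubmonoid.closure G).add_mem ((AddSubmonoid.closure G).add_mem h1 h2) h3
  have keyGen : ∀ p ∈ G, ∀ q ∈ G, γh (B p q) = ⁅γh p, γh q⁆ := by
    intro p hp q hq
    rw [hG] at hp hq
    obtain (⟨a, rfl⟩ | ⟨c, d, rfl⟩ | ⟨b, rfl⟩) := hp <;>
      obtain (⟨a', rfl⟩ | ⟨c', d', rfl⟩ | ⟨b', rfl⟩) := hq
    · rw [hBmm, map_zero, γhm, γhm, hgr.mm _ (hγm a) _ (hγm a')]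
    · rw [Banti, hBzm, map_neg, γhm, γhm, γhzt, hhomm, lie_skew]
    · rw [hBmp, γhzt, γhm, γhp]
    · rw [hBzm, γhm, hhomm, γhzt, γhm]
    · rw [hBzz, γhz, map_sub, ψmk, ψmk, φtmul, φtmul, hhomm, hhomp, lieid, γhzt, γhzt]
    · rw [hBzp, γhp, map_neg, hhomp, γhzt, γhp, ← lie_skew (γm c) (γp d), neg_lie]
    · rw [Banti, hBmp, map_neg, γhzt, γhp, γhm, lie_skew]
    · rw [Banti, hBzp, map_neg, γhp, map_neg, neg_neg, hhomp, γhp, γhzt,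
        ← lie_skew (γp b) ⁅γm c', γp d'⁆, ← lie_skew (γp d') (γm c'), neg_lie]
    · rw [hBpp, map_zero, γhp, γhp, hgr.pp _ (hγp b) _ (hγp b')]
  have key1 : ∀ p ∈ G, ∀ q, γh (B p q) = ⁅γh p, γh q⁆ := by
    intro p hp q
    refine AddSubmonoid.closure_induction
      (motive := fun q _ => γh (B p q) = ⁅γh p, γh q⁆) ?_ ?_ ?_ (hclos q)
    · intro x hx; exact keyGen p hp x hx
    · simp only [Bzero_r, map_zero, lie_zero]
    · intro x y _ _ hx hy
      show γh (B p (x + y)) = ⁅γh p, γh (x + y)⁆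
      rw [Badd_r, map_add, map_add, lie_add, hx, hy]
  have key : ∀ p q, γh (B p q) = ⁅γh p, γh q⁆ := by
    intro p q
    refine AddSubmonoid.closure_induction
      (motive := fun p _ => γh (B p q) = ⁅γh p, γh q⁆) ?_ ?_ ?_ (hclos p)
    · intro x hx; exact key1 x hx q
    · simp only [Bzero_l, map_zero, zero_lie]
    · intro x y _ _ hx hy
      show γh (B (x + y) q) = ⁅γh (x + y), γh q⁆
      rw [Badd_l, map_add, map_add, add_lie, hx, hy]
  have formula : ∀ γh' : (Pm × ((Pm ⊗[k] Pp) ⧸ A) × Pp) →ₗ[k] L,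
      ((∀ p q, γh' (B p q) = ⁅γh' p, γh' q⁆) ∧
       (∀ X : (Pm ⊗[k] Pp) ⧸ A, γh' (0, X, 0) ∈ Lz) ∧
       (∀ a : Pm, γh' (a, 0, 0) = γm a) ∧
       (∀ b : Pp, γh' (0, 0, b) = γp b)) →
      ∀ (c : Pm) (d : Pp),
        γh' (0, Submodule.Quotient.mk (c ⊗ₜ[k] d), 0) = ⁅γm c, γp d⁆ := by
    rintro γh' ⟨hlie, _, hm', hp'⟩ c d
    rw [← hBmp, hlie, hm', hp']
  refine ⟨⟨γh, ⟨key, grading, γhm, γhp⟩, ?_⟩, formula⟩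
  rintro γh' ⟨hlie, hz', hm', hp'⟩
  apply LinearMap.ext
  intro p
  refine AddSubmonoid.closure_induction
    (motive := fun p _ => γh' p = γh p) ?_ (by simp) ?_ (hclos p)
  · intro x hx
    show γh' x = γh x
    rw [hG] at hx
    obtain (⟨a, rfl⟩ | ⟨c, d, rfl⟩ | ⟨b, rfl⟩) := hx
    · rw [hm' a, γhm]
    · rw [formula γh' ⟨hlie, hz', hm', hp'⟩, γhzt]
    · rw [hp' b, γhp]
  · intro x y _ _ hx hy
    show γh' (x + y) = γh (x + y)
    rw [map_add, map_add, hx, hy]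
end

section
/- Let L be a 0-perfect 3-graded Lie algebra and let υ : ûTKK(F(L)) → L be the canonical graded central 0-extension, where F(L) = (L₋₁, L₁) is the induced Jordan pair. Then υ is universal among central 0-extensions: for every graded surjective Lie homomorphism φ : K → L with kernel contained in K₀ ∩ Z(K), there is a unique graded Lie homomorphism ψ : ûTKK(F(L)) → K with φ∘ψ = υ. -/
open scoped TensorProduct

theorem lie4aux2 {L : Type*} [LieRing L] (a b c d : L) :
    ⁅⁅⁅a,b⁆,c⁆,d⁆ - ⁅c,⁅⁅b,a⁆,d⁆⁆ = ⁅⁅a,b⁆,⁅c,d⁆⁆ := by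
  have h1 : ⁅⁅a,b⁆,⁅c,d⁆⁆ = ⁅⁅⁅a,b⁆,c⁆,d⁆ + ⁅c,⁅⁅a,b⁆,d⁆⁆ := leibniz_lie _ _ _
  have hba : ⁅b,a⁆ = -⁅a,b⁆ := (lie_skew b a).symm
  rw [hba, neg_lie, lie_neg, sub_neg_eq_add, ← h1]

theorem lie4aux {L : Type*} [LieRing L] (a b c d : L) :
    ⁅⁅⁅a,b⁆,c⁆,d⁆ - ⁅c,⁅⁅b,a⁆,d⁆⁆ + (⁅⁅⁅c,d⁆,a⁆,b⁆ - ⁅a,⁅⁅d,c⁆,b⁆⁆) = 0 := by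
  rw [lie4aux2, lie4aux2]
  rw [← lie_skew ⁅a,b⁆ ⁅c,d⁆]
  abel

set_option maxHeartbeats 2000000 in
/-- If `L` is a 0-perfect 3-graded Lie algebra and
`υ : ûTKK(F(L)) → L` is the canonical graded central 0-extension, where
`F(L) = (L₋₁, L₁)` is the induced Jordan pair, then `υ` is universal among
central 0-extensions: every graded surjective Lie homomorphism `φ : K → L`
with kernel in `K₀ ∩ Z(K)` admits a unique graded Lie homomorphism
`ψ : ûTKK(F(L)) → K` with `φ ∘ ψ = υ`. -/
theorem stmt16 {k : Type u} [CommRing k]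
    {L : Type v} [LieRing L] [LieAlgebra k L]
    (Lm Lz Lp : Submodule k L) (hgr : IsGrading3 k L Lm Lz Lp)
    -- L is 0-perfect
    (hperf : Lz ≤ Submodule.span k {x : L | ∃ a ∈ Lm, ∃ b ∈ Lp, x = ⁅a, b⁆})
    -- the induced Jordan pair F(L) = (L₋₁, L₁), {a,b,c} = [[a,b],c]
    (tm : Lm → Lp → Lm → Lm) (tp : Lp → Lm → Lp → Lp)
    (htm : ∀ (a c : Lm) (b : Lp), (tm a b c : L) = ⁅⁅(a : L), (b : L)⁆, (c : L)⁆)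
    (htp : ∀ (b d : Lp) (a : Lm), (tp b a d : L) = ⁅⁅(b : L), (a : L)⁆, (d : L)⁆)
    -- ûTKK(F(L)) = L₋₁ × ⟨L₋₁,L₁⟩ × L₁
    (A : Submodule k (Lm ⊗[k] Lp))
    (hA : A = Submodule.span k {x | ∃ a c : Lm, ∃ b d : Lp,
      x = (tm a b c ⊗ₜ[k] d - c ⊗ₜ[k] tp b a d)
        + (tm c d a ⊗ₜ[k] b - a ⊗ₜ[k] tp d c b)})
    (B : (Lm × ((Lm ⊗[k] Lp) ⧸ A) × Lp) → (Lm × ((Lm ⊗[k] Lp) ⧸ A) × Lp) →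
         (Lm × ((Lm ⊗[k] Lp) ⧸ A) × Lp))
    (hB : IsLieBracket (k := k) B)
    (hBmm : ∀ a c : Lm, B (a, 0, 0) (c, 0, 0) = 0)
    (hBpp : ∀ b d : Lp, B (0, 0, b) (0, 0, d) = 0)
    (hBmp : ∀ (a : Lm) (b : Lp), B (a, 0, 0) (0, 0, b)
      = (0, Submodule.Quotient.mk (a ⊗ₜ[k] b), 0))
    (hBzm : ∀ (a c : Lm) (b : Lp),
      B (0, Submodule.Quotient.mk (a ⊗ₜ[k] b), 0) (c, 0, 0) = (tm a b c, 0, 0))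
    (hBzp : ∀ (a : Lm) (b d : Lp),
      B (0, Submodule.Quotient.mk (a ⊗ₜ[k] b), 0) (0, 0, d) = (0, 0, -(tp b a d)))
    (hBzz : ∀ (a c : Lm) (b d : Lp),
      B (0, Submodule.Quotient.mk (a ⊗ₜ[k] b), 0)
        (0, Submodule.Quotient.mk (c ⊗ₜ[k] d), 0)
      = (0, Submodule.Quotient.mk (tm a b c ⊗ₜ[k] d)
            - Submodule.Quotient.mk (c ⊗ₜ[k] tp b a d), 0))
    -- the canonical map υ : ûTKK(F(L)) → L extending the identity on (L₋₁, L₁)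
    (υ : (Lm × ((Lm ⊗[k] Lp) ⧸ A) × Lp) →ₗ[k] L)
    (hυm : ∀ a : Lm, υ (a, 0, 0) = (a : L))
    (hυp : ∀ b : Lp, υ (0, 0, b) = (b : L))
    (hυz : ∀ (a : Lm) (b : Lp),
      υ (0, Submodule.Quotient.mk (a ⊗ₜ[k] b), 0) = ⁅(a : L), (b : L)⁆)
    (hυlie : ∀ p q, υ (B p q) = ⁅υ p, υ q⁆) :
    -- universality: every central 0-extension of L factors uniquely through υ
    ∀ (K : Type w) (_ : LieRing K) (_ : LieAlgebra k K)
      (Km Kz Kp : Submodule k K) (_ : IsGrading3 k K Km Kz Kp)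
      (φ : K →ₗ⁅k⁆ L),
      (∀ x ∈ Km, φ x ∈ Lm) → (∀ x ∈ Kz, φ x ∈ Lz) → (∀ x ∈ Kp, φ x ∈ Lp) →
      Function.Surjective φ →
      (∀ x : K, φ x = 0 → x ∈ Kz) →
      (∀ x : K, φ x = 0 → ∀ y : K, ⁅x, y⁆ = 0) →
      ∃! ψ : (Lm × ((Lm ⊗[k] Lp) ⧸ A) × Lp) →ₗ[k] K,
        (∀ p q, ψ (B p q) = ⁅ψ p, ψ q⁆) ∧
        (∀ a : Lm, ψ (a, 0, 0) ∈ Km) ∧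
        (∀ X : (Lm ⊗[k] Lp) ⧸ A, ψ (0, X, 0) ∈ Kz) ∧
        (∀ b : Lp, ψ (0, 0, b) ∈ Kp) ∧
        (∀ p, φ (ψ p) = υ p) := by
  classical
  intro K _ _ Km Kz Kp hgrK φ hφm hφz hφp hφsurj hker _hcent
  -- injectivity of φ on Km and Kp
  have hKmKz : ∀ x : K, x ∈ Km → x ∈ Kz → x = 0 := by
    intro x hm hz
    exact (hgrK.indep x hm (-x) (Kz.neg_mem hz) 0 Kp.zero_mem (by abel)).1
  have hKpKz : ∀ x : K, x ∈ Kp → x ∈ Kz → x = 0 := by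
    intro x hp hz
    exact (hgrK.indep 0 Km.zero_mem (-x) (Kz.neg_mem hz) x hp (by abel)).2.2
  have injm : ∀ x y : K, x ∈ Km → y ∈ Km → φ x = φ y → x = y := by
    intro x y hx hy h
    have h0 : φ (x - y) = 0 := by rw [map_sub, h, sub_self]
    have := hKmKz (x - y) (Km.sub_mem hx hy) (hker _ h0)
    exact sub_eq_zero.mp this
  have injp : ∀ x y : K, x ∈ Kp → y ∈ Kp → φ x = φ y → x = y := by
    intro x y hx hy h
    have h0 : φ (x - y) = 0 := by rw [map_sub, h, sub_self]
    have := hKpKz (x - y) (Kp.sub_mem hx hy) (hker _ h0)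
    exact sub_eq_zero.mp this
  have φadd : ∀ x y : K, φ (x + y) = φ x + φ y := fun x y => φ.toLinearMap.map_add x y
  have φzero : φ (0 : K) = 0 := φ.toLinearMap.map_zero
  -- restricted maps
  let fm : Km →ₗ[k] Lm := (φ : K →ₗ[k] L).restrict hφm
  let fp : Kp →ₗ[k] Lp := (φ : K →ₗ[k] L).restrict hφp
  have hfm_apply : ∀ x : Km, (fm x : L) = φ (x : K) := fun x => rfl
  have hfp_apply : ∀ x : Kp, (fp x : L) = φ (x : K) := fun x => rfl
  have hfm_bij : Function.Bijective fm := by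
    constructor
    · intro x y h
      exact Subtype.ext (injm _ _ x.2 y.2 (by rw [← hfm_apply, ← hfm_apply, h]))
    · intro a
      obtain ⟨x, hx⟩ := hφsurj (a : L)
      obtain ⟨xm, hm, xz, hz, xp, hp, hxe⟩ := hgrK.decomp x
      have hsum : (φ xm - (a : L)) + φ xz + φ xp = 0 := by
        have h' : φ xm + φ xz + φ xp = (a : L) := by
          rw [← φadd, ← φadd, ← hxe, hx]
        rw [sub_add_eq_add_sub, sub_add_eq_add_sub, h', sub_self]
      have h0 := (hgr.indep _ (Lm.sub_mem (hφm xm hm) a.2) _ (hφz xz hz) _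
        (hφp xp hp) hsum).1
      exact ⟨⟨xm, hm⟩, Subtype.ext (by rw [hfm_apply]; exact sub_eq_zero.mp h0)⟩
  have hfp_bij : Function.Bijective fp := by
    constructor
    · intro x y h
      exact Subtype.ext (injp _ _ x.2 y.2 (by rw [← hfp_apply, ← hfp_apply, h]))
    · intro b
      obtain ⟨x, hx⟩ := hφsurj (b : L)
      obtain ⟨xm, hm, xz, hz, xp, hp, hxe⟩ := hgrK.decomp x
      have hsum : φ xm + φ xz + (φ xp - (b : L)) = 0 := by
        have h' : φ xm + φ xz + φ xp = (b : L) := by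
          rw [← φadd, ← φadd, ← hxe, hx]
        rw [← add_sub_assoc, h', sub_self]
      have h0 := (hgr.indep _ (hφm xm hm) _ (hφz xz hz) _
        (Lp.sub_mem (hφp xp hp) b.2) hsum).2.2
      exact ⟨⟨xp, hp⟩, Subtype.ext (by rw [hfp_apply]; exact sub_eq_zero.mp h0)⟩
  let em : Km ≃ₗ[k] Lm := LinearEquiv.ofBijective fm hfm_bij
  let ep : Kp ≃ₗ[k] Lp := LinearEquiv.ofBijective fp hfp_bij
  let ψm : Lm →ₗ[k] Km := (em.symm : Lm →ₗ[k] Km)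
  let ψp : Lp →ₗ[k] Kp := (ep.symm : Lp →ₗ[k] Kp)
  have hψm : ∀ a : Lm, φ ((ψm a : Km) : K) = (a : L) := by
    intro a
    have h := em.apply_symm_apply a
    have := congrArg Subtype.val h
    rw [← this]
    rfl
  have hψp : ∀ b : Lp, φ ((ψp b : Kp) : K) = (b : L) := by
    intro b
    have h := ep.apply_symm_apply b
    have := congrArg Subtype.val h
    rw [← this]
    rfl
  -- key bracket identifications
  have keyM : ∀ (a c : Lm) (b : Lp),
      ((ψm (tm a b c) : Km) : K) = ⁅⁅(ψm a : K), (ψp b : K)⁆, (ψm c : K)⁆ := by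
    intro a c b
    have hz : ⁅(ψm a : K), (ψp b : K)⁆ ∈ Kz := hgrK.mp _ (ψm a).2 _ (ψp b).2
    have hmem : ⁅⁅(ψm a : K), (ψp b : K)⁆, (ψm c : K)⁆ ∈ Km := by
      rw [show (⁅⁅(ψm a : K), (ψp b : K)⁆, (ψm c : K)⁆ : K)
        = -⁅(ψm c : K), ⁅(ψm a : K), (ψp b : K)⁆⁆ from (lie_skew _ _).symm]
      exact Km.neg_mem (hgrK.mz _ (ψm c).2 _ hz)
    refine injm _ _ (ψm _).2 hmem ?_
    rw [hψm, htm, LieHom.map_lie, LieHom.map_lie, hψm, hψp, hψm]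
  have keyP : ∀ (b d : Lp) (a : Lm),
      ((ψp (tp b a d) : Kp) : K) = ⁅⁅(ψp b : K), (ψm a : K)⁆, (ψp d : K)⁆ := by
    intro b d a
    have hz : ⁅(ψp b : K), (ψm a : K)⁆ ∈ Kz := by
      rw [show (⁅(ψp b : K), (ψm a : K)⁆ : K)
        = -⁅(ψm a : K), (ψp b : K)⁆ from (lie_skew _ _).symm]
      exact Kz.neg_mem (hgrK.mp _ (ψm a).2 _ (ψp b).2)
    have hmem : ⁅⁅(ψp b : K), (ψm a : K)⁆, (ψp d : K)⁆ ∈ Kp := by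
      rw [show (⁅⁅(ψp b : K), (ψm a : K)⁆, (ψp d : K)⁆ : K)
        = -⁅(ψp d : K), ⁅(ψp b : K), (ψm a : K)⁆⁆ from (lie_skew _ _).symm]
      exact Kp.neg_mem (hgrK.pz _ (ψp d).2 _ hz)
    refine injp _ _ (ψp _).2 hmem ?_
    rw [hψp, htp, LieHom.map_lie, LieHom.map_lie, hψp, hψm, hψp]
  -- the bilinear map and its lift to the tensor product
  let β : Lm →ₗ[k] Lp →ₗ[k] K := LinearMap.mk₂ k
    (fun a b => ⁅((ψm a : Km) : K), ((ψp b : Kp) : K)⁆)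
    (by intro a a' b; simp only [map_add, Submodule.coe_add, add_lie])
    (by intro c a b; simp only [map_smul, SetLike.val_smul, smul_lie])
    (by intro a b b'; simp only [map_add, Submodule.coe_add, lie_add])
    (by intro c a b; simp only [map_smul, SetLike.val_smul, lie_smul])
  let T : Lm ⊗[k] Lp →ₗ[k] K := TensorProduct.lift β
  have hT : ∀ (a : Lm) (b : Lp),
      T (a ⊗ₜ[k] b) = ⁅((ψm a : Km) : K), ((ψp b : Kp) : K)⁆ := fun a b => rfl
  have hAker : A ≤ LinearMap.ker T := by
    rw [hA, Submodule.span_le]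
    rintro x ⟨a, c, b, d, rfl⟩
    simp only [SetLike.mem_coe, LinearMap.mem_ker, map_add, map_sub, hT]
    rw [keyM, keyP, keyM, keyP]
    exact lie4aux _ _ _ _
  let ψz : ((Lm ⊗[k] Lp) ⧸ A) →ₗ[k] K := A.liftQ T hAker
  have hψz : ∀ s : Lm ⊗[k] Lp, ψz (Submodule.Quotient.mk s) = T s := fun s => rfl
  -- the map ψ
  let ψ : (Lm × ((Lm ⊗[k] Lp) ⧸ A) × Lp) →ₗ[k] K :=
    (Km.subtype ∘ₗ ψm) ∘ₗ LinearMap.fst k Lm (((Lm ⊗[k] Lp) ⧸ A) × Lp)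
    + ψz ∘ₗ (LinearMap.fst k ((Lm ⊗[k] Lp) ⧸ A) Lp
        ∘ₗ LinearMap.snd k Lm (((Lm ⊗[k] Lp) ⧸ A) × Lp))
    + (Kp.subtype ∘ₗ ψp) ∘ₗ (LinearMap.snd k ((Lm ⊗[k] Lp) ⧸ A) Lp
        ∘ₗ LinearMap.snd k Lm (((Lm ⊗[k] Lp) ⧸ A) × Lp))
  have hψ_apply : ∀ (a : Lm) (t : (Lm ⊗[k] Lp) ⧸ A) (b : Lp),
      ψ (a, t, b) = ((ψm a : Km) : K) + ψz t + ((ψp b : Kp) : K) := fun a t b => rfl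
  have hψM : ∀ a : Lm, ψ (a, 0, 0) = ((ψm a : Km) : K) := by
    intro a; rw [hψ_apply]; simp
  have hψZ : ∀ t, ψ (0, t, 0) = ψz t := by
    intro t; rw [hψ_apply]; simp
  have hψP : ∀ b : Lp, ψ (0, 0, b) = ((ψp b : Kp) : K) := by
    intro b; rw [hψ_apply]; simp
  -- splitting lemmas
  have hsplit : ∀ (a : Lm) (t : (Lm ⊗[k] Lp) ⧸ A) (b : Lp),
      ((a, t, b) : Lm × ((Lm ⊗[k] Lp) ⧸ A) × Lp) = (a, 0, 0) + (0, t, 0) + (0, 0, b) := by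
    intro a t b
    simp [Prod.ext_iff]
  have hmidadd : ∀ X Y : (Lm ⊗[k] Lp) ⧸ A,
      ((0, X + Y, 0) : Lm × ((Lm ⊗[k] Lp) ⧸ A) × Lp) = (0, X, 0) + (0, Y, 0) := by
    intro X Y
    simp [Prod.ext_iff]
  -- grading of ψz
  have hψzKz : ∀ t, ψz t ∈ Kz := by
    intro t
    obtain ⟨s, rfl⟩ := Submodule.Quotient.mk_surjective A t
    induction s using TensorProduct.induction_on with
    | zero => rw [Submodule.Quotient.mk_zero, map_zero]; exact Kz.zero_mem
    | tmul a b => rw [hψz, hT]; exact hgrK.mp _ (ψm a).2 _ (ψp b).2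
    | add x y hx hy =>
        rw [Submodule.Quotient.mk_add, map_add]; exact Kz.add_mem hx hy
  -- compatibility with υ
  have hφψz : ∀ t, φ (ψz t) = υ (0, t, 0) := by
    intro t
    obtain ⟨s, rfl⟩ := Submodule.Quotient.mk_surjective A t
    induction s using TensorProduct.induction_on with
    | zero =>
        rw [Submodule.Quotient.mk_zero, map_zero, φzero]
        have h0 : ((0, (0 : (Lm ⊗[k] Lp) ⧸ A), (0 : Lp)) :
          Lm × ((Lm ⊗[k] Lp) ⧸ A) × Lp) = 0 := rfl
        rw [h0, map_zero]
    | tmul a b => rw [hψz, hT, LieHom.map_lie, hψm, hψp, hυz]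
    | add x y hx hy =>
        rw [Submodule.Quotient.mk_add, map_add, φadd, hx, hy, hmidadd, map_add]
  have hφψ : ∀ p, φ (ψ p) = υ p := by
    rintro ⟨a, t, b⟩
    rw [hψ_apply, φadd, φadd, hψm, hψp, hφψz,
      hsplit a t b, map_add, map_add, hυm, hυp]
  -- the Lie bracket property
  obtain ⟨Badd_l, Badd_r, Bsmul_l, Bsmul_r, Balt, _Bjac⟩ := hB
  have hB0l : ∀ q, B 0 q = 0 := by
    intro q
    have := Bsmul_l (0 : k) 0 q
    simpa using this
  have hB0r : ∀ p, B p 0 = 0 := by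
    intro p
    have := Bsmul_r (0 : k) p 0
    simpa using this
  have hBskew : ∀ p q, B q p = -B p q := by
    intro p q
    have h := Balt (p + q)
    rw [Badd_l, Badd_r, Badd_r, Balt p, Balt q] at h
    have h2 : B p q + B q p = 0 := by
      rw [zero_add, add_zero] at h
      exact h
    exact (neg_eq_of_add_eq_zero_right h2).symm
  have Psymm : ∀ p q, ψ (B p q) = ⁅ψ p, ψ q⁆ → ψ (B q p) = ⁅ψ q, ψ p⁆ := by
    intro p q h
    rw [hBskew, map_neg, h]
    exact lie_skew _ _
  have Paddr : ∀ p q q', ψ (B p q) = ⁅ψ p, ψ q⁆ → ψ (B p q') = ⁅ψ p, ψ q'⁆ →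
      ψ (B p (q + q')) = ⁅ψ p, ψ (q + q')⁆ := by
    intro p q q' h h'
    rw [Badd_r, map_add, h, h', map_add, lie_add]
  have P0r : ∀ p, ψ (B p 0) = ⁅ψ p, ψ 0⁆ := by
    intro p
    rw [hB0r, map_zero, lie_zero]
  -- generator cases
  have Pmm : ∀ a c : Lm, ψ (B (a,0,0) (c,0,0)) = ⁅ψ (a,0,0), ψ (c,0,0)⁆ := by
    intro a c
    rw [hBmm, map_zero, hψM, hψM, hgrK.mm _ (ψm a).2 _ (ψm c).2]
  have Ppp : ∀ b d : Lp, ψ (B (0,0,b) (0,0,d)) = ⁅ψ (0,0,b), ψ (0,0,d)⁆ := by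
    intro b d
    rw [hBpp, map_zero, hψP, hψP, hgrK.pp _ (ψp b).2 _ (ψp d).2]
  have Pmp : ∀ (a : Lm) (b : Lp),
      ψ (B (a,0,0) (0,0,b)) = ⁅ψ (a,0,0), ψ (0,0,b)⁆ := by
    intro a b
    rw [hBmp, hψZ, hψz, hT, hψM, hψP]
  have Pzm : ∀ (a c : Lm) (b : Lp),
      ψ (B (0, Submodule.Quotient.mk (a ⊗ₜ[k] b), 0) (c,0,0))
        = ⁅ψ (0, Submodule.Quotient.mk (a ⊗ₜ[k] b), 0), ψ (c,0,0)⁆ := by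
    intro a c b
    rw [hBzm, hψM, hψZ, hψz, hT, hψM, keyM]
  have Pzp : ∀ (a : Lm) (b d : Lp),
      ψ (B (0, Submodule.Quotient.mk (a ⊗ₜ[k] b), 0) (0,0,d))
        = ⁅ψ (0, Submodule.Quotient.mk (a ⊗ₜ[k] b), 0), ψ (0,0,d)⁆ := by
    intro a b d
    rw [hBzp, hψP, hψZ, hψz, hT, hψP, map_neg, Submodule.coe_neg, keyP]
    rw [show (⁅(ψp b : K), (ψm a : K)⁆ : K)
      = -⁅(ψm a : K), (ψp b : K)⁆ from (lie_skew _ _).symm]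
    rw [neg_lie, neg_neg]
  have Pzz : ∀ (a c : Lm) (b d : Lp),
      ψ (B (0, Submodule.Quotient.mk (a ⊗ₜ[k] b), 0)
          (0, Submodule.Quotient.mk (c ⊗ₜ[k] d), 0))
        = ⁅ψ (0, Submodule.Quotient.mk (a ⊗ₜ[k] b), 0),
           ψ (0, Submodule.Quotient.mk (c ⊗ₜ[k] d), 0)⁆ := by
    intro a c b d
    rw [hBzz, hψZ, hψZ, hψZ, hψz, hψz, map_sub, hψz, hψz, hT, hT, hT, hT,
      keyM, keyP]
    exact lie4aux2 _ _ _ _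
  -- extension principle
  have extend : ∀ p : Lm × ((Lm ⊗[k] Lp) ⧸ A) × Lp,
      (∀ c : Lm, ψ (B p (c,0,0)) = ⁅ψ p, ψ (c,0,0)⁆) →
      (∀ d : Lp, ψ (B p (0,0,d)) = ⁅ψ p, ψ (0,0,d)⁆) →
      (∀ (c : Lm) (d : Lp), ψ (B p (0, Submodule.Quotient.mk (c ⊗ₜ[k] d), 0))
        = ⁅ψ p, ψ (0, Submodule.Quotient.mk (c ⊗ₜ[k] d), 0)⁆) →
      ∀ q, ψ (B p q) = ⁅ψ p, ψ q⁆ := by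
    intro p hM hP hZ q
    obtain ⟨c, t, d⟩ := q
    have hmid : ψ (B p (0, t, 0)) = ⁅ψ p, ψ (0, t, 0)⁆ := by
      obtain ⟨s, rfl⟩ := Submodule.Quotient.mk_surjective A t
      induction s using TensorProduct.induction_on with
      | zero =>
          rw [Submodule.Quotient.mk_zero]
          exact P0r p
      | tmul x y => exact hZ x y
      | add x y hx hy =>
          rw [Submodule.Quotient.mk_add, hmidadd]
          exact Paddr _ _ _ hx hy
    rw [hsplit c t d]
    exact Paddr _ _ _ (Paddr _ _ _ (hM c) hmid) (hP d)
  have hMall : ∀ (a : Lm) q, ψ (B (a,0,0) q) = ⁅ψ (a,0,0), ψ q⁆ :=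
    fun a => extend _ (fun c => Pmm a c) (fun d => Pmp a d)
      (fun c d => Psymm _ _ (Pzm c a d))
  have hZall : ∀ (a : Lm) (b : Lp) q,
      ψ (B (0, Submodule.Quotient.mk (a ⊗ₜ[k] b), 0) q)
        = ⁅ψ (0, Submodule.Quotient.mk (a ⊗ₜ[k] b), 0), ψ q⁆ :=
    fun a b => extend _ (fun c => Pzm a c b) (fun d => Pzp a b d)
      (fun c d => Pzz a c b d)
  have hPall : ∀ (b : Lp) q, ψ (B (0,0,b) q) = ⁅ψ (0,0,b), ψ q⁆ :=
    fun b => extend _ (fun c => Psymm _ _ (Pmp c b)) (fun d => Ppp b d)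
      (fun c d => Psymm _ _ (Pzp c d b))
  have hlie : ∀ p q, ψ (B p q) = ⁅ψ p, ψ q⁆ :=
    fun p => extend p (fun c => Psymm _ _ (hMall c p))
      (fun d => Psymm _ _ (hPall d p))
      (fun c d => Psymm _ _ (hZall c d p))
  -- conclusion
  refine ⟨ψ, ⟨hlie, ?_, ?_, ?_, hφψ⟩, ?_⟩
  · intro a; rw [hψM]; exact (ψm a).2
  · intro X; rw [hψZ]; exact hψzKz X
  · intro b; rw [hψP]; exact (ψp b).2
  · rintro ψ' ⟨hlie', hm', hz', hp', hφ'⟩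
    have eM : ∀ a : Lm, ψ' (a, 0, 0) = ((ψm a : Km) : K) := by
      intro a
      exact injm _ _ (hm' a) (ψm a).2 (by rw [hφ', hυm, hψm])
    have eP : ∀ b : Lp, ψ' (0, 0, b) = ((ψp b : Kp) : K) := by
      intro b
      exact injp _ _ (hp' b) (ψp b).2 (by rw [hφ', hυp, hψp])
    have eZpure : ∀ (a : Lm) (b : Lp),
        ψ' (0, Submodule.Quotient.mk (a ⊗ₜ[k] b), 0)
          = ψ (0, Submodule.Quotient.mk (a ⊗ₜ[k] b), 0) := by
      intro a b
      rw [← hBmp a b, hlie', hlie, eM, eP, hψM, hψP]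
    have eZ : ∀ t, ψ' (0, t, 0) = ψ (0, t, 0) := by
      intro t
      obtain ⟨s, rfl⟩ := Submodule.Quotient.mk_surjective A t
      induction s using TensorProduct.induction_on with
      | zero =>
          rw [Submodule.Quotient.mk_zero]
          have h0 : ((0, (0 : (Lm ⊗[k] Lp) ⧸ A), (0 : Lp)) :
            Lm × ((Lm ⊗[k] Lp) ⧸ A) × Lp) = 0 := rfl
          rw [h0, map_zero, map_zero]
      | tmul x y => exact eZpure x y
      | add x y hx hy =>
          rw [Submodule.Quotient.mk_add, hmidadd, map_add, map_add, hx, hy]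
    apply LinearMap.ext
    rintro ⟨a, t, b⟩
    rw [hsplit a t b, map_add, map_add, map_add, map_add, eM, eP, eZ, hψM, hψP]
end

section
/- Let L = L₋₁⊕L₀⊕L₁ be a 0-perfect 3-graded Lie algebra over a field of characteristic ≠ 2,3, and suppose H²_gr(L,M) = 0 for every L-module M concentrated in degree 0 (which is automatically a trivial module since LM = ([L₁,L₁]+L₁)M-type arguments force the action to vanish). Then every central 0-extension φ : K → L splits: there exists a graded Lie algebra homomorphism ψ : L → K with φ∘ψ = id_L. -/
/-- `x` has degree `i ∈ {-1, 0, 1}` with respect to the grading. -/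
def HasDeg {k : Type*} [CommRing k] {L : Type*} [LieRing L] [LieAlgebra k L]
    (Lm Lz Lp : Submodule k L) (i : ℤ) (x : L) : Prop :=
  (i = -1 ∧ x ∈ Lm) ∨ (i = 0 ∧ x ∈ Lz) ∨ (i = 1 ∧ x ∈ Lp)

/-- Let `L` be a 0-perfect 3-graded Lie algebra over a field of
characteristic ≠ 2,3 with `H²_gr(L,M) = 0` for every coefficient module `M`
concentrated in degree 0 (on which the action of `L` is then necessarily
trivial): every degree-0 2-cocycle with values in `M` is the coboundary of a
degree-0 linear map. Then every central 0-extension `φ : K → L` splits via a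
graded Lie algebra homomorphism `ψ : L → K` with `φ ∘ ψ = id`. -/
theorem stmt19 {k : Type u} [Field k]
    (hchar2 : (2 : k) ≠ 0) (hchar3 : (3 : k) ≠ 0)
    {L : Type u} [LieRing L] [LieAlgebra k L]
    (Lm Lz Lp : Submodule k L) (hgr : IsGrading3 k L Lm Lz Lp)
    -- L is 0-perfect
    (hperf : Lz = Submodule.span k {x : L | ∃ a ∈ Lm, ∃ b ∈ Lp, x = ⁅a, b⁆})
    -- H²_gr(L,M) = 0 for every module M with the trivial grading M = M₀
    (hH2 : ∀ (M : Type u) (_ : AddCommGroup M) (_ : Module k M)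
      (σ : L →ₗ[k] L →ₗ[k] M),
      -- σ is alternating
      (∀ x : L, σ x x = 0) →
      -- σ is a 2-cocycle (with trivial coefficients)
      (∀ x y z : L, σ ⁅x, y⁆ z - σ ⁅x, z⁆ y + σ ⁅y, z⁆ x = 0) →
      -- σ has degree 0: it vanishes on L_i ∧ L_j unless i + j = 0
      (∀ (i j : ℤ) (x y : L), HasDeg Lm Lz Lp i x → HasDeg Lm Lz Lp j y →
        i + j ≠ 0 → σ x y = 0) →
      -- σ is the coboundary of a degree-0 cochain τ (τ(L_{±1}) = 0)
      ∃ τ : L →ₗ[k] M, (∀ x ∈ Lm, τ x = 0) ∧ (∀ x ∈ Lp, τ x = 0) ∧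
        ∀ x y : L, σ x y = τ ⁅x, y⁆) :
    -- every central 0-extension of L splits via a graded homomorphism
    ∀ (K : Type u) (_ : LieRing K) (_ : LieAlgebra k K)
      (Km Kz Kp : Submodule k K) (_ : IsGrading3 k K Km Kz Kp)
      (φ : K →ₗ⁅k⁆ L),
      (∀ x ∈ Km, φ x ∈ Lm) → (∀ x ∈ Kz, φ x ∈ Lz) → (∀ x ∈ Kp, φ x ∈ Lp) →
      Function.Surjective φ →
      (∀ x : K, φ x = 0 → x ∈ Kz) →
      (∀ x : K, φ x = 0 → ∀ y : K, ⁅x, y⁆ = 0) →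
      ∃ ψ : L →ₗ⁅k⁆ K,
        (∀ x ∈ Lm, ψ x ∈ Km) ∧ (∀ x ∈ Lz, ψ x ∈ Kz) ∧ (∀ x ∈ Lp, ψ x ∈ Kp) ∧
        ∀ x, φ (ψ x) = x := by
  intro K _instK _instKA Km Kz Kp hK φ hφm hφz hφp hsurj hker hcent
  classical
  -- triangle lemmas in K
  have htm : ∀ w : K, w ∈ Km → w ∈ Kz → w = 0 := by
    intro w hw hz
    exact (hK.indep w hw (-w) (neg_mem hz) 0 (zero_mem _) (by abel)).1
  have htp : ∀ w : K, w ∈ Kp → w ∈ Kz → w = 0 := by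
    intro w hw hz
    exact (hK.indep 0 (zero_mem _) (-w) (neg_mem hz) w hw (by abel)).2.2
  -- φ is surjective on each graded piece
  have hsurjm : ∀ a ∈ Lm, ∃ x ∈ Km, φ x = a := by
    intro a ha
    obtain ⟨x, hx⟩ := hsurj a
    obtain ⟨xm, hxm, xz, hxz, xp, hxp, rfl⟩ := hK.decomp x
    have hx' : φ xm + φ xz + φ xp = a := by simpa [map_add] using hx
    have h0 : (φ xm - a) + φ xz + φ xp = 0 := by rw [← hx']; abel
    have := hgr.indep _ (sub_mem (hφm xm hxm) ha) _ (hφz xz hxz) _ (hφp xp hxp) h0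
    exact ⟨xm, hxm, sub_eq_zero.1 this.1⟩
  have hsurjz : ∀ a ∈ Lz, ∃ x ∈ Kz, φ x = a := by
    intro a ha
    obtain ⟨x, hx⟩ := hsurj a
    obtain ⟨xm, hxm, xz, hxz, xp, hxp, rfl⟩ := hK.decomp x
    have hx' : φ xm + φ xz + φ xp = a := by simpa [map_add] using hx
    have h0 : φ xm + (φ xz - a) + φ xp = 0 := by rw [← hx']; abel
    have := hgr.indep _ (hφm xm hxm) _ (sub_mem (hφz xz hxz) ha) _ (hφp xp hxp) h0
    exact ⟨xz, hxz, sub_eq_zero.1 this.2.1⟩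
  have hsurjp : ∀ a ∈ Lp, ∃ x ∈ Kp, φ x = a := by
    intro a ha
    obtain ⟨x, hx⟩ := hsurj a
    obtain ⟨xm, hxm, xz, hxz, xp, hxp, rfl⟩ := hK.decomp x
    have hx' : φ xm + φ xz + φ xp = a := by simpa [map_add] using hx
    have h0 : φ xm + φ xz + (φ xp - a) = 0 := by rw [← hx']; abel
    have := hgr.indep _ (hφm xm hxm) _ (hφz xz hxz) _ (sub_mem (hφp xp hxp) ha) h0
    exact ⟨xp, hxp, sub_eq_zero.1 this.2.2⟩
  -- restricted maps and their linear sections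
  obtain ⟨gm, hgm⟩ := LinearMap.exists_rightInverse_of_surjective
    (LinearMap.codRestrict Lm ((φ : K →ₗ[k] L).domRestrict Km) (fun c => hφm c c.2))
    (LinearMap.range_eq_top.2 (by
      rintro ⟨a, ha⟩
      obtain ⟨x, hx, hφx⟩ := hsurjm a ha
      exact ⟨⟨x, hx⟩, Subtype.ext hφx⟩))
  obtain ⟨gz, hgz⟩ := LinearMap.exists_rightInverse_of_surjective
    (LinearMap.codRestrict Lz ((φ : K →ₗ[k] L).domRestrict Kz) (fun c => hφz c c.2))
    (LinearMap.range_eq_top.2 (by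
      rintro ⟨a, ha⟩
      obtain ⟨x, hx, hφx⟩ := hsurjz a ha
      exact ⟨⟨x, hx⟩, Subtype.ext hφx⟩))
  obtain ⟨gp, hgp⟩ := LinearMap.exists_rightInverse_of_surjective
    (LinearMap.codRestrict Lp ((φ : K →ₗ[k] L).domRestrict Kp) (fun c => hφp c c.2))
    (LinearMap.range_eq_top.2 (by
      rintro ⟨a, ha⟩
      obtain ⟨x, hx, hφx⟩ := hsurjp a ha
      exact ⟨⟨x, hx⟩, Subtype.ext hφx⟩))
  set sm : Lm →ₗ[k] K := Km.subtype.comp gm with hsm_def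
  set sz : Lz →ₗ[k] K := Kz.subtype.comp gz with hsz_def
  set sp : Lp →ₗ[k] K := Kp.subtype.comp gp with hsp_def
  have hsm_mem : ∀ a : Lm, sm a ∈ Km := fun a => (gm a).2
  have hsz_mem : ∀ a : Lz, sz a ∈ Kz := fun a => (gz a).2
  have hsp_mem : ∀ a : Lp, sp a ∈ Kp := fun a => (gp a).2
  have hsm_sec : ∀ a : Lm, φ (sm a) = (a : L) := by
    intro a
    have := congrArg Subtype.val (LinearMap.ext_iff.1 hgm a)
    exact this
  have hsz_sec : ∀ a : Lz, φ (sz a) = (a : L) := by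
    intro a
    have := congrArg Subtype.val (LinearMap.ext_iff.1 hgz a)
    exact this
  have hsp_sec : ∀ a : Lp, φ (sp a) = (a : L) := by
    intro a
    have := congrArg Subtype.val (LinearMap.ext_iff.1 hgp a)
    exact this
  -- the decomposition equivalence for L
  set e : ((Lm × Lz) × Lp) →ₗ[k] L := (Lm.subtype.coprod Lz.subtype).coprod Lp.subtype
    with he_def
  have he_apply : ∀ p : (Lm × Lz) × Lp, e p = (p.1.1 : L) + p.1.2 + p.2 := by
    intro p; simp [he_def, add_assoc]
  have hinj : Function.Injective e := by
    rw [← LinearMap.ker_eq_bot, LinearMap.ker_eq_bot']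
    rintro ⟨⟨a, b⟩, c⟩ h
    rw [he_apply] at h
    obtain ⟨h1, h2, h3⟩ := hgr.indep _ a.2 _ b.2 _ c.2 h
    refine Prod.ext (Prod.ext ?_ ?_) ?_ <;> exact Subtype.ext (by assumption)
  have hsurje : Function.Surjective e := by
    intro x
    obtain ⟨a, ha, b, hb, c, hc, rfl⟩ := hgr.decomp x
    exact ⟨((⟨a, ha⟩, ⟨b, hb⟩), ⟨c, hc⟩), by rw [he_apply]⟩
  set E : ((Lm × Lz) × Lp) ≃ₗ[k] L := LinearEquiv.ofBijective e ⟨hinj, hsurje⟩ with hE_def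
  have hE_apply : ∀ p, E p = e p := fun p => rfl
  -- the graded linear section s : L → K
  set t : ((Lm × Lz) × Lp) →ₗ[k] K := (sm.coprod sz).coprod sp with ht_def
  have ht_apply : ∀ p : (Lm × Lz) × Lp, t p = sm p.1.1 + sz p.1.2 + sp p.2 := by
    intro p; simp [ht_def, add_assoc]
  set s : L →ₗ[k] K := t.comp (E.symm : L →ₗ[k] ((Lm × Lz) × Lp)) with hs_def
  have hs_apply : ∀ x : L, s x = sm (E.symm x).1.1 + sz (E.symm x).1.2 + sp (E.symm x).2 := by
    intro x; rw [hs_def]; exact ht_apply _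
  have hφs : ∀ x : L, φ (s x) = x := by
    intro x
    have hx : e (E.symm x) = x := E.apply_symm_apply x
    rw [he_apply] at hx
    rw [hs_apply, map_add φ, map_add φ, hsm_sec, hsz_sec, hsp_sec, hx]
  -- s is graded
  have hsymm_m : ∀ (x : L) (hx : x ∈ Lm), E.symm x = ((⟨x, hx⟩, 0), 0) := by
    intro x hx
    rw [LinearEquiv.symm_apply_eq, hE_apply, he_apply]
    simp
  have hsymm_z : ∀ (x : L) (hx : x ∈ Lz), E.symm x = ((0, ⟨x, hx⟩), 0) := by
    intro x hx
    rw [LinearEquiv.symm_apply_eq, hE_apply, he_apply]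
    simp
  have hsymm_p : ∀ (x : L) (hx : x ∈ Lp), E.symm x = ((0, 0), ⟨x, hx⟩) := by
    intro x hx
    rw [LinearEquiv.symm_apply_eq, hE_apply, he_apply]
    simp
  have hsKm : ∀ x ∈ Lm, s x ∈ Km := by
    intro x hx
    rw [hs_apply, hsymm_m x hx]
    simpa using hsm_mem ⟨x, hx⟩
  have hsKz : ∀ x ∈ Lz, s x ∈ Kz := by
    intro x hx
    rw [hs_apply, hsymm_z x hx]
    simpa using hsz_mem ⟨x, hx⟩
  have hsKp : ∀ x ∈ Lp, s x ∈ Kp := by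
    intro x hx
    rw [hs_apply, hsymm_p x hx]
    simpa using hsp_mem ⟨x, hx⟩
  -- the cocycle σ with values in M = ker φ
  set M : Submodule k K := LinearMap.ker (φ : K →ₗ[k] L) with hM_def
  have hmemM : ∀ x y : L, s ⁅x, y⁆ - ⁅s x, s y⁆ ∈ M := by
    intro x y
    rw [hM_def, LinearMap.mem_ker]
    show φ (s ⁅x, y⁆ - ⁅s x, s y⁆) = 0
    rw [map_sub φ, LieHom.map_lie, hφs, hφs, hφs, sub_self]
  have hMker : ∀ w : M, φ (w : K) = 0 := by
    intro w
    have h := LinearMap.mem_ker.1 w.2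
    exact h
  set σ : L →ₗ[k] L →ₗ[k] M := LinearMap.mk₂ k
      (fun x y => (⟨s ⁅x, y⁆ - ⁅s x, s y⁆, hmemM x y⟩ : M))
      (fun x x' y => Subtype.ext (by
        show s ⁅x + x', y⁆ - ⁅s (x + x'), s y⁆ =
          (s ⁅x, y⁆ - ⁅s x, s y⁆) + (s ⁅x', y⁆ - ⁅s x', s y⁆)
        rw [add_lie, map_add, map_add, add_lie]; abel))
      (fun c x y => Subtype.ext (by
        show s ⁅c • x, y⁆ - ⁅s (c • x), s y⁆ = c • (s ⁅x, y⁆ - ⁅s x, s y⁆)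
        rw [smul_lie, map_smul, map_smul, smul_lie, smul_sub]))
      (fun x y y' => Subtype.ext (by
        show s ⁅x, y + y'⁆ - ⁅s x, s (y + y')⁆ =
          (s ⁅x, y⁆ - ⁅s x, s y⁆) + (s ⁅x, y'⁆ - ⁅s x, s y'⁆)
        rw [lie_add, map_add, map_add, lie_add]; abel))
      (fun c x y => Subtype.ext (by
        show s ⁅x, c • y⁆ - ⁅s x, s (c • y)⁆ = c • (s ⁅x, y⁆ - ⁅s x, s y⁆)
        rw [lie_smul, map_smul, map_smul, lie_smul, smul_sub]))
    with hσ_def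
  have hσ_apply : ∀ x y : L, (σ x y : K) = s ⁅x, y⁆ - ⁅s x, s y⁆ := by
    intro x y; rw [hσ_def]; rfl
  -- central elements kill brackets
  have hcent' : ∀ x y : L, ∀ w : K, ⁅s ⁅x, y⁆, w⁆ = ⁅⁅s x, s y⁆, w⁆ := by
    intro x y w
    have h0 : ⁅s ⁅x, y⁆ - ⁅s x, s y⁆, w⁆ = 0 := by
      apply hcent
      exact hMker ⟨_, hmemM x y⟩
    rw [sub_lie, sub_eq_zero] at h0
    exact h0
  -- apply the H² hypothesis
  obtain ⟨τ, hτm, hτp, hτ⟩ := hH2 M inferInstance inferInstance σ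
    (by
      intro x
      apply Subtype.ext
      rw [hσ_apply]
      simp [lie_self])
    (by
      intro x y z
      apply Subtype.ext
      push_cast [hσ_apply]
      rw [hcent', hcent', hcent']
      have h1 : s ⁅⁅x, y⁆, z⁆ - s ⁅⁅x, z⁆, y⁆ + s ⁅⁅y, z⁆, x⁆ = 0 := by
        rw [← map_sub, ← map_add]
        have : ⁅⁅x, y⁆, z⁆ - ⁅⁅x, z⁆, y⁆ + ⁅⁅y, z⁆, x⁆ = (0 : L) := by
          rw [lie_lie, ← lie_skew ⁅x, z⁆ y, ← lie_skew ⁅y, z⁆ x]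
          abel
        rw [this, map_zero]
      have h2 : ⁅⁅s x, s y⁆, s z⁆ - ⁅⁅s x, s z⁆, s y⁆ + ⁅⁅s y, s z⁆, s x⁆ = 0 := by
        rw [lie_lie, ← lie_skew ⁅s x, s z⁆ (s y), ← lie_skew ⁅s y, s z⁆ (s x)]
        abel
      have key : ∀ a b c d ef f : K, a - b + c = 0 → d - ef + f = 0 →
          (a - d) - (b - ef) + (c - f) = 0 := by
        intro a b c d ef f h1 h2
        have : (a - d) - (b - ef) + (c - f) = (a - b + c) - (d - ef + f) := by abel
        rw [this, h1, h2, sub_zero]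
      exact key _ _ _ _ _ _ h1 h2)
    (by
      intro i j x y hx hy hij
      apply Subtype.ext
      show (σ x y : K) = ((0 : M) : K)
      rw [hσ_apply, ZeroMemClass.coe_zero, sub_eq_zero]
      rcases hx with ⟨rfl, hxm⟩ | ⟨rfl, hxz⟩ | ⟨rfl, hxp⟩ <;>
        rcases hy with ⟨rfl, hym⟩ | ⟨rfl, hyz⟩ | ⟨rfl, hyp⟩
      · -- (-1,-1)
        rw [hgr.mm x hxm y hym, map_zero, hK.mm _ (hsKm x hxm) _ (hsKm y hym)]
      · -- (-1,0)
        have hb : s ⁅x, y⁆ - ⁅s x, s y⁆ ∈ Km :=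
          sub_mem (hsKm _ (hgr.mz x hxm y hyz)) (hK.mz _ (hsKm x hxm) _ (hsKz y hyz))
        have hz : s ⁅x, y⁆ - ⁅s x, s y⁆ ∈ Kz := hker _ (hMker ⟨_, hmemM x y⟩)
        exact sub_eq_zero.1 (htm _ hb hz)
      · exact absurd rfl hij
      · -- (0,-1)
        have hxyL : ⁅x, y⁆ ∈ Lm := by
          rw [← lie_skew]; exact neg_mem (hgr.mz y hym x hxz)
        have hxyK : ⁅s x, s y⁆ ∈ Km := by
          rw [← lie_skew]; exact neg_mem (hK.mz _ (hsKm y hym) _ (hsKz x hxz))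
        have hb : s ⁅x, y⁆ - ⁅s x, s y⁆ ∈ Km := sub_mem (hsKm _ hxyL) hxyK
        have hz : s ⁅x, y⁆ - ⁅s x, s y⁆ ∈ Kz := hker _ (hMker ⟨_, hmemM x y⟩)
        exact sub_eq_zero.1 (htm _ hb hz)
      · exact absurd rfl hij
      · -- (0,1)
        have hxyL : ⁅x, y⁆ ∈ Lp := by
          rw [← lie_skew]; exact neg_mem (hgr.pz y hyp x hxz)
        have hxyK : ⁅s x, s y⁆ ∈ Kp := by
          rw [← lie_skew]; exact neg_mem (hK.pz _ (hsKp y hyp) _ (hsKz x hxz))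
        have hb : s ⁅x, y⁆ - ⁅s x, s y⁆ ∈ Kp := sub_mem (hsKp _ hxyL) hxyK
        have hz : s ⁅x, y⁆ - ⁅s x, s y⁆ ∈ Kz := hker _ (hMker ⟨_, hmemM x y⟩)
        exact sub_eq_zero.1 (htp _ hb hz)
      · exact absurd rfl hij
      · -- (1,0)
        have hb : s ⁅x, y⁆ - ⁅s x, s y⁆ ∈ Kp :=
          sub_mem (hsKp _ (hgr.pz x hxp y hyz)) (hK.pz _ (hsKp x hxp) _ (hsKz y hyz))
        have hz : s ⁅x, y⁆ - ⁅s x, s y⁆ ∈ Kz := hker _ (hMker ⟨_, hmemM x y⟩)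
        exact sub_eq_zero.1 (htp _ hb hz)
      · -- (1,1)
        rw [hgr.pp x hxp y hyp, map_zero, hK.pp _ (hsKp x hxp) _ (hsKp y hyp)])
  -- τ takes values in the (central) kernel
  have hτc : ∀ x : L, ∀ w : K, ⁅((τ x : M) : K), w⁆ = 0 := by
    intro x w
    exact hcent _ (hMker (τ x)) w
  -- define ψ := s - τ
  set ψ₀ : L →ₗ[k] K := s - M.subtype.comp τ with hψ₀_def
  have hψ₀_apply : ∀ x : L, ψ₀ x = s x - ((τ x : M) : K) := fun x => rfl
  refine ⟨{ toLinearMap := ψ₀, map_lie' := ?_ }, ?_, ?_, ?_, ?_⟩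
  · intro x y
    show ψ₀ ⁅x, y⁆ = ⁅ψ₀ x, ψ₀ y⁆
    rw [hψ₀_apply, hψ₀_apply, hψ₀_apply]
    have hτxy : ((τ ⁅x, y⁆ : M) : K) = s ⁅x, y⁆ - ⁅s x, s y⁆ := by
      rw [← hσ_apply, hτ]
    have hz1 : ⁅((τ x : M) : K), s y - ((τ y : M) : K)⁆ = 0 := hτc x _
    have hz2 : ⁅s x, ((τ y : M) : K)⁆ = 0 := by rw [← lie_skew, hτc, neg_zero]
    rw [hτxy, sub_lie, lie_sub, hz1, hz2]
    abel
  · intro x hx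
    show ψ₀ x ∈ Km
    rw [hψ₀_apply, hτm x hx]
    simpa using hsKm x hx
  · intro x hx
    show ψ₀ x ∈ Kz
    rw [hψ₀_apply]
    exact sub_mem (hsKz x hx) (hker _ (hMker (τ x)))
  · intro x hx
    show ψ₀ x ∈ Kp
    rw [hψ₀_apply, hτp x hx]
    simpa using hsKp x hx
  · intro x
    show φ (ψ₀ x) = x
    rw [hψ₀_apply, map_sub φ, hφs, hMker (τ x), sub_zero]
end
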